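/- arXiv:1309.3663 — 4 statements merged into one kernel-verified Lean document; each statement's English description precedes it below -/
import Mathlib

section
/- Let {X_t} be a stationary Markov chain on a finite set A = {1,...,n} with doublet frequency vector μ ∈ M_s(A²) satisfying μ_{ij} > 0 for all i, j. Define c̲ = 2 log(min_i μ̄_i) − log(max_{i,j} μ_{ij}) and c̄ = 2 log(max_i μ̄_i) − log(min_{i,j} μ_{ij}). Then for every l ≥ 1 and every sample path x_1^l ∈ A^l, writing ν = ν(x_1^l) for the cyclic empirical doublet measure and ν̄ for its marginal, one has −l[J(ν,μ) − J(ν̄,μ̄)] + c̲ ≤ log Pr{X_1^l = x_1^l} ≤ −l[J(ν,μ) − J(ν̄,μ̄)] + c̄, where J(ν,μ) = Σ_{i,j} ν_{ij} log(1/μ_{ij}) and J(ν̄,μ̄) = Σ_i ν̄_i log(1/μ̄_i). -/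
open Finset

/-- Marginal of a doublet distribution. -/
def marg {n : ℕ} (ν : Fin n → Fin n → ℝ) : Fin n → ℝ := fun i => ∑ j, ν i j

def IsProb2 {n : ℕ} (ν : Fin n → Fin n → ℝ) : Prop :=
  (∀ i j, 0 ≤ ν i j) ∧ ∑ i, ∑ j, ν i j = 1

def IsStat2 {n : ℕ} (ν : Fin n → Fin n → ℝ) : Prop :=
  ∀ i, ∑ j, ν i j = ∑ j, ν j i

/-- Cyclic empirical doublet measure of a sample path of length `l = m+1`,
with the convention `x_{l+1} := x_1`. -/
noncomputable def emp2 {n m : ℕ} (x : Fin (m+1) → Fin n) : Fin n → Fin n → ℝ :=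
  fun i j => (∑ t : Fin (m+1), if x t = i ∧ x (t+1) = j then (1:ℝ) else 0) / (m+1)

/-- Law of the stationary Markov chain with doublet distribution `μ` on paths of
length `l = m+1`:  `Pr{X_1^l = x} = μ̄(x_1) ∏_{t=1}^{l-1} μ(x_t x_{t+1})/μ̄(x_t)`. -/
noncomputable def pathP {n : ℕ} (μ : Fin n → Fin n → ℝ) {m : ℕ} (x : Fin (m+1) → Fin n) : ℝ :=
  marg μ (x 0) * ∏ t : Fin m, (μ (x t.castSucc) (x t.succ) / marg μ (x t.castSucc))

/-- The loss function `J(ν,μ) = Σ_{ij} ν_{ij} log(1/μ_{ij})`. -/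
noncomputable def J2 {n : ℕ} (ν μ : Fin n → Fin n → ℝ) : ℝ :=
  ∑ i, ∑ j, ν i j * Real.log (1 / μ i j)

/-- The loss function `J(ν̄,μ̄) = Σ_i ν̄_i log(1/μ̄_i)`. -/
noncomputable def J1 {n : ℕ} (p q : Fin n → ℝ) : ℝ := ∑ i, p i * Real.log (1 / q i)

lemma double_ind {n : ℕ} (a b : Fin n) (c : Fin n → Fin n → ℝ) :
    ∑ i, ∑ j, (if a = i ∧ b = j then (1:ℝ) else 0) * c i j = c a b := by
  simp [ite_and, ite_mul, Finset.sum_ite_eq]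

lemma sum_swap3 {α β γ : Type*} [Fintype α] [Fintype β] [Fintype γ] (f : α → β → γ → ℝ) :
    ∑ i : α, ∑ j : β, ∑ t : γ, f i j t = ∑ t, ∑ i, ∑ j, f i j t := by
  calc ∑ i : α, ∑ j : β, ∑ t : γ, f i j t
      = ∑ i : α, ∑ t : γ, ∑ j : β, f i j t :=
        Finset.sum_congr rfl fun i _ => Finset.sum_comm
    _ = _ := Finset.sum_comm

lemma key {n : ℕ} (μ : Fin n → Fin n → ℝ) (hpos : ∀ i j, 0 < μ i j)
    (hm : ∀ i, 0 < marg μ i) (m : ℕ) (x : Fin (m+1) → Fin n) :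
    Real.log (pathP μ x) =
      -(((m:ℝ)+1) * (J2 (emp2 x) μ - J1 (marg (emp2 x)) (marg μ)))
      + (Real.log (marg μ (x 0)) + Real.log (marg μ (x (Fin.last m)))
          - Real.log (μ (x (Fin.last m)) (x 0))) := by
  have hl : ((m:ℝ)+1) ≠ 0 := by positivity
  -- (m+1) * J2 term
  have h2 : ((m:ℝ)+1) * J2 (emp2 x) μ
      = ∑ t : Fin (m+1), Real.log (1 / μ (x t) (x (t+1))) := by
    have e1 : ∀ i j, ((m:ℝ)+1) * (emp2 x i j * Real.log (1 / μ i j))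
        = ∑ t : Fin (m+1),
            (if x t = i ∧ x (t+1) = j then (1:ℝ) else 0) * Real.log (1 / μ i j) := by
      intro i j
      rw [← Finset.sum_mul, emp2]
      field_simp
    rw [J2, Finset.mul_sum]
    simp_rw [Finset.mul_sum, e1]
    rw [sum_swap3]
    exact Finset.sum_congr rfl fun t _ => double_ind _ _ _
  -- (m+1) * J1 term
  have h1 : ((m:ℝ)+1) * J1 (marg (emp2 x)) (marg μ)
      = ∑ t : Fin (m+1), Real.log (1 / marg μ (x t)) := by
    have e2 : ∀ i, ((m:ℝ)+1) * (marg (emp2 x) i * Real.log (1 / marg μ i))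
        = ∑ t : Fin (m+1), (if x t = i then (1:ℝ) else 0) * Real.log (1 / marg μ i) := by
      intro i
      have : marg (emp2 x) i = (∑ t : Fin (m+1), if x t = i then (1:ℝ) else 0) / (m+1) := by
        rw [marg]
        simp only [emp2]
        rw [← Finset.sum_div]
        congr 1
        rw [Finset.sum_comm]
        refine Finset.sum_congr rfl fun t _ => ?_
        simp [ite_and, Finset.sum_ite_eq]
      rw [this, ← Finset.sum_mul]
      field_simp
    rw [J1, Finset.mul_sum]
    simp_rw [e2]
    rw [Finset.sum_comm]
    refine Finset.sum_congr rfl fun t _ => ?_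
    simp [ite_mul, Finset.sum_ite_eq]
  -- log of pathP
  have hlogP : Real.log (pathP μ x)
      = Real.log (marg μ (x 0))
        + ∑ t : Fin m, (Real.log (μ (x t.castSucc) (x t.succ))
            - Real.log (marg μ (x t.castSucc))) := by
    rw [pathP, Real.log_mul (ne_of_gt (hm _)) (ne_of_gt (Finset.prod_pos fun t _ =>
      div_pos (hpos _ _) (hm _))), Real.log_prod
      (fun t _ => ne_of_gt (div_pos (hpos _ _) (hm _)))]
    simp_rw [Real.log_div (ne_of_gt (hpos _ _)) (ne_of_gt (hm _))]
  -- put together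
  have hsum : ∑ t : Fin (m+1), (Real.log (μ (x t) (x (t+1))) - Real.log (marg μ (x t)))
      = ∑ t : Fin m, (Real.log (μ (x t.castSucc) (x t.succ)) - Real.log (marg μ (x t.castSucc)))
        + (Real.log (μ (x (Fin.last m)) (x 0)) - Real.log (marg μ (x (Fin.last m)))) := by
    rw [Fin.sum_univ_castSucc]
    simp [Fin.coeSucc_eq_succ, Fin.last_add_one]
  rw [hlogP, mul_sub, h1, h2]
  simp only [one_div, Real.log_inv]
  rw [Finset.sum_sub_distrib] at hsum
  simp only [one_div, Real.log_inv, Finset.sum_neg_distrib]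
  linarith

/-- For a stationary Markov chain with strictly positive doublet
frequency vector `μ ∈ M_s(A²)`, set
`c̲ = 2 log(min_i μ̄_i) − log(max_{ij} μ_{ij})` and
`c̄ = 2 log(max_i μ̄_i) − log(min_{ij} μ_{ij})`.  Then for every `l ≥ 1` (here `l = m+1`)
and every sample path `x_1^l`, with `ν = ν(x_1^l)` the cyclic empirical doublet measure,
`−l[J(ν,μ) − J(ν̄,μ̄)] + c̲ ≤ log Pr{X_1^l = x_1^l} ≤ −l[J(ν,μ) − J(ν̄,μ̄)] + c̄`. -/
theorem stmt5 {n : ℕ} (hn : 0 < n) (μ : Fin n → Fin n → ℝ)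
    (hμ : IsProb2 μ ∧ IsStat2 μ) (hpos : ∀ i j, 0 < μ i j) :
    ∀ (m : ℕ) (x : Fin (m+1) → Fin n),
      (-(((m:ℝ)+1) * (J2 (emp2 x) μ - J1 (marg (emp2 x)) (marg μ)))
          + (2 * Real.log (sInf (Set.range (marg μ)))
              - Real.log (sSup (Set.range fun p : Fin n × Fin n => μ p.1 p.2)))
        ≤ Real.log (pathP μ x)) ∧
      (Real.log (pathP μ x)
        ≤ -(((m:ℝ)+1) * (J2 (emp2 x) μ - J1 (marg (emp2 x)) (marg μ)))
          + (2 * Real.log (sSup (Set.range (marg μ)))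
              - Real.log (sInf (Set.range fun p : Fin n × Fin n => μ p.1 p.2)))) := by
  haveI : Nonempty (Fin n) := ⟨⟨0, hn⟩⟩
  have hm : ∀ i, 0 < marg μ i := fun i =>
    Finset.sum_pos (fun j _ => hpos i j) Finset.univ_nonempty
  intro m x
  set S1 : Set ℝ := Set.range (marg μ) with hS1
  set S2 : Set ℝ := Set.range fun p : Fin n × Fin n => μ p.1 p.2 with hS2
  have hS1fin : S1.Finite := Set.finite_range _
  have hS2fin : S2.Finite := Set.finite_range _
  have hS1ne : S1.Nonempty := Set.range_nonempty _
  have hS2ne : S2.Nonempty := Set.range_nonempty _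
  have hInf1mem : sInf S1 ∈ S1 := hS1ne.csInf_mem hS1fin
  have hSup1mem : sSup S1 ∈ S1 := hS1ne.csSup_mem hS1fin
  have hInf2mem : sInf S2 ∈ S2 := hS2ne.csInf_mem hS2fin
  have hSup2mem : sSup S2 ∈ S2 := hS2ne.csSup_mem hS2fin
  have hInf1pos : 0 < sInf S1 := by obtain ⟨i, hi⟩ := hInf1mem; exact hi ▸ hm i
  have hSup1pos : 0 < sSup S1 := by obtain ⟨i, hi⟩ := hSup1mem; exact hi ▸ hm i
  have hInf2pos : 0 < sInf S2 := by obtain ⟨p, hp⟩ := hInf2mem; exact hp ▸ hpos p.1 p.2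
  have hle1 : ∀ i, sInf S1 ≤ marg μ i := fun i => csInf_le hS1fin.bddBelow ⟨i, rfl⟩
  have hge1 : ∀ i, marg μ i ≤ sSup S1 := fun i => le_csSup hS1fin.bddAbove ⟨i, rfl⟩
  have hle2 : ∀ a b, sInf S2 ≤ μ a b := fun a b => csInf_le hS2fin.bddBelow ⟨(a, b), rfl⟩
  have hge2 : ∀ a b, μ a b ≤ sSup S2 := fun a b => le_csSup hS2fin.bddAbove ⟨(a, b), rfl⟩
  have hk := key μ hpos hm m x
  constructor
  · rw [hk]
    have b1 := Real.log_le_log hInf1pos (hle1 (x 0))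
    have b2 := Real.log_le_log hInf1pos (hle1 (x (Fin.last m)))
    have b3 := Real.log_le_log (hpos (x (Fin.last m)) (x 0)) (hge2 (x (Fin.last m)) (x 0))
    linarith
  · rw [hk]
    have b1 := Real.log_le_log (hm (x 0)) (hge1 (x 0))
    have b2 := Real.log_le_log (hm (x (Fin.last m))) (hge1 (x (Fin.last m)))
    have b3 := Real.log_le_log hInf2pos (hle2 (x (Fin.last m)) (x 0))
    linarith
end

section
/- Let {X_t} be a stationary Markov chain on a finite set A = {1,...,n} with doublet frequency vector μ ∈ M_s(A²) satisfying μ_{ij} > 0 for all i, j. Then for EVERY subset Γ ⊆ M_s(A²) (not necessarily closed), limsup_{l→∞} (1/l) log Pr{ν(x_1^l) ∈ Γ} ≤ −inf_{ζ∈Γ} D_c(ζ‖μ). -/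
open Finset Filter

/-- The set `M_s(A²)` of stationary probability distributions on `A²`. -/
def Ms2 (n : ℕ) : Set (Fin n → Fin n → ℝ) := {ν | IsProb2 ν ∧ IsStat2 ν}

/-- Relative entropy of doublet distributions. -/
noncomputable def DKL2 {n : ℕ} (ν μ : Fin n → Fin n → ℝ) : ℝ :=
  ∑ i, ∑ j, ν i j * Real.log (ν i j / μ i j)

/-- Relative entropy of probability vectors. -/
noncomputable def DKL1 {n : ℕ} (p q : Fin n → ℝ) : ℝ := ∑ i, p i * Real.log (p i / q i)

/-- Conditional relative entropy `D_c(ν‖μ) = D(ν‖μ) − D(ν̄‖μ̄)`. -/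
noncomputable def Dc {n : ℕ} (ν μ : Fin n → Fin n → ℝ) : ℝ :=
  DKL2 ν μ - DKL1 (marg ν) (marg μ)

open scoped Classical in
/-- `Pr{ν(x_1^l) ∈ Γ}`: probability of the set of sample paths of length `l = m+1`
whose cyclic empirical doublet measure lies in `Γ`. -/
noncomputable def prEvent {n : ℕ} (μ : Fin n → Fin n → ℝ) (m : ℕ)
    (Γ : Set (Fin n → Fin n → ℝ)) : ℝ :=
  ∑ x : Fin (m+1) → Fin n, if emp2 x ∈ Γ then pathP μ x else 0

/-- Extended-real logarithm, `elog p = −∞` for `p ≤ 0`. -/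
noncomputable def elog (p : ℝ) : EReal := if p ≤ 0 then ⊥ else ((Real.log p : ℝ) : EReal)




section
variable {n m : ℕ}

def cnt (x : Fin (m+1) → Fin n) (i j : Fin n) : ℕ :=
  ∑ t : Fin (m+1), if x t = i ∧ x (t+1) = j then 1 else 0

def rowc (x : Fin (m+1) → Fin n) (i : Fin n) : ℕ :=
  ∑ t : Fin (m+1), if x t = i then 1 else 0

lemma cnt_le (x : Fin (m+1) → Fin n) (i j : Fin n) : cnt x i j ≤ m + 1 := by
  calc cnt x i j ≤ ∑ _t : Fin (m+1), 1 := Finset.sum_le_sum (by intro t _; split <;> omega)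
  _ = m + 1 := by simp

lemma row_cnt (x : Fin (m+1) → Fin n) (i : Fin n) : ∑ j, cnt x i j = rowc x i := by
  unfold cnt rowc
  rw [Finset.sum_comm]
  refine Finset.sum_congr rfl fun t _ => ?_
  by_cases h : x t = i <;> simp [h, ite_and]

lemma sum_rowc (x : Fin (m+1) → Fin n) : ∑ i, rowc x i = m + 1 := by
  unfold rowc
  rw [Finset.sum_comm]
  simp

lemma one_le_cnt (x : Fin (m+1) → Fin n) (t : Fin (m+1)) :
    1 ≤ cnt x (x t) (x (t+1)) := by
  unfold cnt
  calc (1:ℕ) = if x t = x t ∧ x (t+1) = x (t+1) then 1 else 0 := by simp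
  _ ≤ _ := Finset.single_le_sum (f := fun t' => if x t' = x t ∧ x (t'+1) = x (t+1) then 1 else 0)
      (fun _ _ => by positivity) (mem_univ t)

lemma one_le_rowc (x : Fin (m+1) → Fin n) (t : Fin (m+1)) :
    1 ≤ rowc x (x t) := by
  unfold rowc
  calc (1:ℕ) = if x t = x t then 1 else 0 := by simp
  _ ≤ _ := Finset.single_le_sum (f := fun t' => if x t' = x t then 1 else 0)
      (fun _ _ => by positivity) (mem_univ t)

lemma prod_cyclic (F : Fin n → Fin n → ℝ) (x : Fin (m+1) → Fin n) :
    ∏ t : Fin (m+1), F (x t) (x (t+1)) = ∏ i, ∏ j, F i j ^ cnt x i j := by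
  classical
  have h := Finset.prod_comp (s := (univ : Finset (Fin (m+1))))
    (fun p : Fin n × Fin n => F p.1 p.2) (fun t => (x t, x (t+1)))
  have h2 : ∏ b ∈ (univ : Finset (Fin (m+1))).image (fun t => (x t, x (t+1))),
      F b.1 b.2 ^ #(filter (fun a => (x a, x (a + 1)) = b) univ)
      = ∏ b : Fin n × Fin n, F b.1 b.2 ^ #(filter (fun a => (x a, x (a + 1)) = b) univ) := by
    refine Finset.prod_subset (Finset.subset_univ _) ?_
    intro p _ hp
    have he : (univ.filter fun t : Fin (m+1) => (x t, x (t+1)) = p) = ∅ := by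
      rw [Finset.filter_eq_empty_iff]
      intro t _ ht
      exact hp (Finset.mem_image.2 ⟨t, mem_univ t, ht⟩)
    rw [he]
    simp
  calc ∏ t : Fin (m+1), F (x t) (x (t+1))
      = ∏ b : Fin n × Fin n, F b.1 b.2 ^ #(filter (fun a => (x a, x (a + 1)) = b) univ) := by
        rw [← h2, ← h]
    _ = ∏ i, ∏ j, F i j ^ cnt x i j := by
        rw [Fintype.prod_prod_type]
        refine Finset.prod_congr rfl fun i _ => Finset.prod_congr rfl fun j _ => ?_
        congr 1
        rw [cnt, Finset.card_filter]
        exact Finset.sum_congr rfl fun t _ => by simp [Prod.ext_iff]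

end
section
variable {n m : ℕ}

lemma emp2_eq (x : Fin (m+1) → Fin n) (i j : Fin n) :
    emp2 x i j = (cnt x i j : ℝ) / (m+1) := by
  unfold emp2 cnt
  congr 1
  rw [Nat.cast_sum]
  exact Finset.sum_congr rfl fun t _ => by split <;> simp

lemma emp2_nonneg (x : Fin (m+1) → Fin n) (i j : Fin n) : 0 ≤ emp2 x i j := by
  rw [emp2_eq]; positivity

lemma marg_emp2 (x : Fin (m+1) → Fin n) (i : Fin n) :
    marg (emp2 x) i = (rowc x i : ℝ) / (m+1) := by
  unfold marg
  rw [← row_cnt, Nat.cast_sum, Finset.sum_div]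
  exact Finset.sum_congr rfl fun j _ => emp2_eq x i j

lemma marg_emp2_nonneg (x : Fin (m+1) → Fin n) (i : Fin n) : 0 ≤ marg (emp2 x) i := by
  rw [marg_emp2]; positivity

lemma sum_emp2 (x : Fin (m+1) → Fin n) : ∑ i, ∑ j, emp2 x i j = 1 := by
  have : ∀ i, ∑ j, emp2 x i j = (rowc x i : ℝ) / (m+1) := marg_emp2 x
  rw [Finset.sum_congr rfl fun i _ => this i, ← Finset.sum_div]
  rw [← Nat.cast_sum, sum_rowc]
  field_simp
  simp

lemma castSucc_add_one (t : Fin m) : (t.castSucc : Fin (m+1)) + 1 = t.succ := by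
  apply Fin.ext
  have h1 : (t:ℕ) < m := t.isLt
  simp [Fin.add_def]
  try omega

lemma last_add_one : (Fin.last m : Fin (m+1)) + 1 = 0 := by
  apply Fin.ext
  simp [Fin.add_def, Fin.last]

lemma pathP_eq (q : Fin n → Fin n → ℝ) (x : Fin (m+1) → Fin n) :
    pathP q x * (q (x (Fin.last m)) (x 0) / marg q (x (Fin.last m)))
      = marg q (x 0) * ∏ i, ∏ j, (q i j / marg q i) ^ cnt x i j := by
  rw [← prod_cyclic (fun i j => q i j / marg q i) x]
  rw [Fin.prod_univ_castSucc (f := fun t : Fin (m+1) => q (x t) (x (t+1)) / marg q (x t))]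
  rw [last_add_one]
  unfold pathP
  rw [mul_assoc]
  congr 2
  exact Finset.prod_congr rfl fun t _ => by rw [castSucc_add_one]

lemma pathP_nonneg (q : Fin n → Fin n → ℝ) (hq : ∀ i j, 0 ≤ q i j)
    (x : Fin (m+1) → Fin n) : 0 ≤ pathP q x := by
  unfold pathP
  have hm : ∀ i, 0 ≤ marg q i := fun i => Finset.sum_nonneg fun j _ => hq i j
  exact mul_nonneg (hm _) (Finset.prod_nonneg fun t _ => div_nonneg (hq _ _) (hm _))

lemma pathP_snoc (q : Fin n → Fin n → ℝ) (y : Fin (m+1) → Fin n) (a : Fin n) :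
    pathP q (Fin.snoc y a) = pathP q y * (q (y (Fin.last m)) a / marg q (y (Fin.last m))) := by
  unfold pathP
  rw [Fin.prod_univ_castSucc (f := fun t : Fin (m+1) =>
    q ((Fin.snoc y a : Fin (m+2) → Fin n) t.castSucc) ((Fin.snoc y a : Fin (m+2) → Fin n) t.succ)
      / marg q ((Fin.snoc y a : Fin (m+2) → Fin n) t.castSucc))]
  have h0 : (Fin.snoc y a : Fin (m+2) → Fin n) 0 = y 0 := by
    rw [show (0 : Fin (m+2)) = Fin.castSucc 0 by simp]
    rw [Fin.snoc_castSucc]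
  have hlast : (Fin.snoc y a : Fin (m+2) → Fin n) (Fin.last m).succ = a := by
    rw [Fin.succ_last, Fin.snoc_last]
  have hlast2 : (Fin.snoc y a : Fin (m+2) → Fin n) (Fin.last m).castSucc = y (Fin.last m) :=
    Fin.snoc_castSucc ..
  rw [h0, hlast, hlast2, mul_assoc]
  congr 2
  refine Finset.prod_congr rfl fun t _ => ?_
  rw [show (t.castSucc : Fin (m+1)).succ = (t.succ).castSucc from (Fin.succ_castSucc t).symm]
  rw [Fin.snoc_castSucc, Fin.snoc_castSucc]

lemma sum_pathP_le_one (q : Fin n → Fin n → ℝ) (hq : ∀ i j, 0 ≤ q i j)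
    (hq1 : ∑ i, ∑ j, q i j ≤ 1) :
    ∀ m, ∑ x : Fin (m+1) → Fin n, pathP q x ≤ 1 := by
  have hm : ∀ i, 0 ≤ marg q i := fun i => Finset.sum_nonneg fun j _ => hq i j
  intro m
  induction m with
  | zero =>
    have : ∀ x : Fin 1 → Fin n, pathP q x = marg q (x 0) := by
      intro x; unfold pathP; simp
    rw [Finset.sum_congr rfl fun x _ => this x]
    rw [← Equiv.sum_comp (Equiv.funUnique (Fin 1) (Fin n)).symm (fun x : Fin 1 → Fin n => marg q (x 0))]
    simpa [marg] using hq1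
  | succ m ih =>
    rw [← Equiv.sum_comp (Fin.snocEquiv (fun _ : Fin (m+2) => Fin n))
      (fun x : Fin (m+2) → Fin n => pathP q x)]
    have hval : ∀ p : Fin n × (Fin (m+1) → Fin n),
        pathP q ((Fin.snocEquiv (fun _ : Fin (m+2) => Fin n)) p) =
        pathP q p.2 * (q (p.2 (Fin.last m)) p.1 / marg q (p.2 (Fin.last m))) := by
      intro p
      have h : (Fin.snocEquiv (fun _ : Fin (m+2) => Fin n)) p = Fin.snoc p.2 p.1 := by
        funext t
        exact Fin.snocEquiv_apply _ _ _
      rw [h]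
      exact pathP_snoc q p.2 p.1
    rw [Finset.sum_congr rfl fun p _ => hval p]
    rw [Fintype.sum_prod_type]
    rw [Finset.sum_comm]
    calc ∑ y : Fin (m+1) → Fin n, ∑ a : Fin n,
          pathP q y * (q (y (Fin.last m)) a / marg q (y (Fin.last m)))
        = ∑ y : Fin (m+1) → Fin n, pathP q y *
            (marg q (y (Fin.last m)) / marg q (y (Fin.last m))) := by
          refine Finset.sum_congr rfl fun y _ => ?_
          rw [← Finset.mul_sum, ← Finset.sum_div]
          rfl
      _ ≤ ∑ y : Fin (m+1) → Fin n, pathP q y := by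
          refine Finset.sum_le_sum fun y _ => ?_
          calc pathP q y * (marg q (y (Fin.last m)) / marg q (y (Fin.last m)))
              ≤ pathP q y * 1 := by
                refine mul_le_mul_of_nonneg_left ?_ (pathP_nonneg q hq y)
                exact div_self_le_one _
            _ = pathP q y := mul_one _
      _ ≤ 1 := ih

end
section
variable {n m : ℕ}

lemma dc_eq (ν μ : Fin n → Fin n → ℝ) :
    Dc ν μ = ∑ i, ∑ j, ν i j *
      (Real.log (ν i j / μ i j) - Real.log (marg ν i / marg μ i)) := by
  unfold Dc DKL2 DKL1
  rw [← Finset.sum_sub_distrib]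
  refine Finset.sum_congr rfl fun i _ => ?_
  rw [show marg ν i * Real.log (marg ν i / marg μ i)
    = ∑ j, ν i j * Real.log (marg ν i / marg μ i) by rw [← Finset.sum_mul]; rfl]
  rw [← Finset.sum_sub_distrib]
  exact Finset.sum_congr rfl fun j _ => by ring

lemma pow_eq_exp (g : ℝ) (N : ℕ) (h : N ≠ 0 → 0 < g) :
    g ^ N = Real.exp (N * Real.log g) := by
  rcases Nat.eq_zero_or_pos N with h0 | h0
  · simp [h0]
  · rw [Real.exp_nat_mul, Real.exp_log (h (by omega))]

lemma key_path (μ : Fin n → Fin n → ℝ) (hpos : ∀ i j, 0 < μ i j)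
    (hsum : ∑ i, ∑ j, μ i j = 1) (x : Fin (m+1) → Fin n) :
    pathP μ x ≤ (∑ i, ∑ j, marg μ i / μ i j) * (m+1)
      * Real.exp (-(m+1) * Dc (emp2 x) μ) * pathP (emp2 x) x := by
  haveI : Nonempty (Fin n) := ⟨x 0⟩
  set ν := emp2 x with hν
  have hl : (0:ℝ) < m+1 := by positivity
  have hmargμ : ∀ i, 0 < marg μ i :=
    fun i => Finset.sum_pos (fun j _ => hpos i j) univ_nonempty
  have hν0 : ∀ i j, 0 ≤ ν i j := emp2_nonneg x
  have hcnt : ∀ i j, cnt x i j ≠ 0 → 0 < ν i j := by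
    intro i j h
    rw [hν, emp2_eq]
    have : (0:ℝ) < cnt x i j := by exact_mod_cast Nat.pos_of_ne_zero h
    positivity
  have hmargν0 : ∀ i, 0 ≤ marg ν i := fun i => Finset.sum_nonneg fun j _ => hν0 i j
  have hνle : ∀ i j, ν i j ≤ marg ν i := fun i j =>
    Finset.single_le_sum (f := fun j => ν i j) (fun j _ => hν0 i j) (mem_univ j)
  have hmargν : ∀ i j, cnt x i j ≠ 0 → 0 < marg ν i :=
    fun i j h => lt_of_lt_of_le (hcnt i j h) (hνle i j)
  set Pμ := ∏ i, ∏ j, (μ i j / marg μ i) ^ cnt x i j with hPμ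
  set Pν := ∏ i, ∏ j, (ν i j / marg ν i) ^ cnt x i j with hPν
  have hPμpos : 0 < Pμ :=
    Finset.prod_pos fun i _ => Finset.prod_pos fun j _ =>
      pow_pos (div_pos (hpos i j) (hmargμ i)) _
  have hPν0 : 0 ≤ Pν :=
    Finset.prod_nonneg fun i _ => Finset.prod_nonneg fun j _ =>
      pow_nonneg (div_nonneg (hν0 i j) (hmargν0 i)) _
  -- exponential forms
  have hgμ : Pμ = Real.exp (∑ i, ∑ j, (cnt x i j : ℝ) * Real.log (μ i j / marg μ i)) := by
    rw [Real.exp_sum]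
    refine Finset.prod_congr rfl fun i _ => ?_
    rw [Real.exp_sum]
    exact Finset.prod_congr rfl fun j _ =>
      pow_eq_exp _ _ fun _ => div_pos (hpos i j) (hmargμ i)
  have hgν : Pν = Real.exp (∑ i, ∑ j, (cnt x i j : ℝ) * Real.log (ν i j / marg ν i)) := by
    rw [Real.exp_sum]
    refine Finset.prod_congr rfl fun i _ => ?_
    rw [Real.exp_sum]
    exact Finset.prod_congr rfl fun j _ =>
      pow_eq_exp _ _ fun h => div_pos (hcnt i j h) (hmargν i j h)
  -- exponent identity
  have hDc : ∑ i, ∑ j, (cnt x i j : ℝ) * Real.log (ν i j / marg ν i)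
      - ∑ i, ∑ j, (cnt x i j : ℝ) * Real.log (μ i j / marg μ i)
      = (m+1) * Dc ν μ := by
    rw [dc_eq, Finset.mul_sum, ← Finset.sum_sub_distrib]
    refine Finset.sum_congr rfl fun i _ => ?_
    rw [Finset.mul_sum, ← Finset.sum_sub_distrib]
    refine Finset.sum_congr rfl fun j _ => ?_
    rcases Nat.eq_zero_or_pos (cnt x i j) with h0 | h0
    · have : ν i j = 0 := by rw [hν, emp2_eq, h0]; simp
      simp [h0, this]
    · have hne : cnt x i j ≠ 0 := by omega
      have hc : ((m:ℝ)+1) * ν i j = (cnt x i j : ℝ) := by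
        rw [hν, emp2_eq]; field_simp
      have e1 := Real.log_div (ne_of_gt (hcnt i j hne)) (ne_of_gt (hmargν i j hne))
      have e2 := Real.log_div (ne_of_gt (hpos i j)) (ne_of_gt (hmargμ i))
      have e3 := Real.log_div (ne_of_gt (hcnt i j hne)) (ne_of_gt (hpos i j))
      have e4 := Real.log_div (ne_of_gt (hmargν i j hne)) (ne_of_gt (hmargμ i))
      rw [e1, e2, e3, e4, ← hc]
      ring
  have hPμν : Pμ = Real.exp (-(m+1) * Dc ν μ) * Pν := by
    rw [hgμ, hgν, ← Real.exp_add]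
    congr 1
    have := hDc
    linarith
  -- bound pathP μ x ≤ K * Pμ
  set K := ∑ i, ∑ j, marg μ i / μ i j with hK
  set L := x (Fin.last m) with hL
  have hKterm : marg μ L / μ L (x 0) ≤ K := by
    calc marg μ L / μ L (x 0)
        ≤ ∑ j, marg μ L / μ L j := Finset.single_le_sum
          (f := fun j => marg μ L / μ L j)
          (fun j _ => le_of_lt (div_pos (hmargμ L) (hpos L j))) (mem_univ (x 0))
      _ ≤ K := Finset.single_le_sum (f := fun i => ∑ j, marg μ i / μ i j)
          (fun i _ => Finset.sum_nonneg fun j _ => le_of_lt (div_pos (hmargμ i) (hpos i j)))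
          (mem_univ L)
  have hmargμ1 : marg μ (x 0) ≤ 1 := by
    rw [← hsum]
    exact Finset.single_le_sum (f := fun i => marg μ i)
      (fun i _ => le_of_lt (hmargμ i)) (mem_univ (x 0))
  have heqμ := pathP_eq μ x
  have hpathμ : pathP μ x = marg μ (x 0) * Pμ * (marg μ L / μ L (x 0)) := by
    rw [← heqμ, ← hL]
    field_simp
    rw [mul_assoc, mul_comm (μ L (x 0)) (marg μ L), mul_div_assoc,
      div_self (ne_of_gt (mul_pos (hmargμ L) (hpos L (x 0)))), mul_one]
  have hstep1 : pathP μ x ≤ K * Pμ := by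
    rw [hpathμ]
    calc marg μ (x 0) * Pμ * (marg μ L / μ L (x 0))
        ≤ 1 * Pμ * K := by
          refine mul_le_mul (mul_le_mul_of_nonneg_right hmargμ1 hPμpos.le) hKterm
            (le_of_lt (div_pos (hmargμ L) (hpos L (x 0)))) ?_
          positivity
      _ = K * Pμ := by ring
  -- bound Pν ≤ (m+1) * pathP ν x
  have hcL : cnt x L (x 0) ≠ 0 := by
    have h1 := one_le_cnt x (Fin.last m)
    rw [last_add_one] at h1
    rw [hL]
    omega
  have heqν := pathP_eq ν x
  have hgle : ν L (x 0) / marg ν L ≤ 1 :=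
    div_le_one_of_le₀ (hνle L (x 0)) (hmargν0 L)
  have hpathν0 : 0 ≤ pathP ν x := pathP_nonneg ν hν0 x
  have hstep2 : marg ν (x 0) * Pν ≤ pathP ν x := by
    rw [← heqν, ← hL]
    calc pathP ν x * (ν L (x 0) / marg ν L) ≤ pathP ν x * 1 :=
          mul_le_mul_of_nonneg_left hgle hpathν0
      _ = pathP ν x := mul_one _
  have hmx0 : 1/((m:ℝ)+1) ≤ marg ν (x 0) := by
    rw [hν, marg_emp2]
    have h1 := one_le_rowc x 0
    have h2 : (1:ℝ) ≤ (rowc x (x 0) : ℝ) := by exact_mod_cast h1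
    gcongr
  have hstep3 : Pν ≤ ((m:ℝ)+1) * pathP ν x := by
    have h1 : (1/((m:ℝ)+1)) * Pν ≤ marg ν (x 0) * Pν :=
      mul_le_mul_of_nonneg_right hmx0 hPν0
    have h2 := h1.trans hstep2
    rw [div_mul_eq_mul_div, one_mul, div_le_iff₀ hl] at h2
    linarith [h2]
  have hK0 : 0 ≤ K := by
    rw [hK]
    exact Finset.sum_nonneg fun i _ => Finset.sum_nonneg fun j _ =>
      le_of_lt (div_pos (hmargμ i) (hpos i j))
  calc pathP μ x ≤ K * Pμ := hstep1
    _ = K * (Real.exp (-(↑m + 1) * Dc ν μ) * Pν) := by rw [hPμν]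
    _ ≤ K * (Real.exp (-(↑m + 1) * Dc ν μ) * (((m:ℝ)+1) * pathP ν x)) := by
        refine mul_le_mul_of_nonneg_left (mul_le_mul_of_nonneg_left hstep3 ?_) hK0
        positivity
    _ = K * (m+1) * Real.exp (-(↑m + 1) * Dc ν μ) * pathP ν x := by
        push_cast
        ring
end
section
variable {n m : ℕ}

lemma card_image_emp2 (T : Finset (Fin (m+1) → Fin n)) :
    (T.image (emp2 (n := n) (m := m))).card ≤ ((m+2)^n)^n := by
  classical
  have hb : ∀ c : ℕ, min c (m+1) < m + 2 := fun c => by omega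
  calc (T.image emp2).card
      ≤ (univ : Finset (Fin n → Fin n → Fin (m+2))).card := by
        refine Finset.card_le_card_of_injOn
          (fun ν i j => (⟨min (Nat.floor (ν i j * (m+1))) (m+1), hb _⟩ : Fin (m+2)))
          (fun _ _ => Finset.mem_univ _) ?_
        intro ν hν ν' hν' heq
        obtain ⟨x, _, rfl⟩ := Finset.mem_image.1 hν
        obtain ⟨x', _, rfl⟩ := Finset.mem_image.1 hν'
        have key : ∀ (y : Fin (m+1) → Fin n) i j,
            min (Nat.floor (emp2 y i j * (m+1))) (m+1) = cnt y i j := by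
          intro y i j
          have h1 : emp2 y i j * (m+1) = (cnt y i j : ℝ) := by
            rw [emp2_eq]
            field_simp
          rw [h1, Nat.floor_natCast]
          exact min_eq_left (cnt_le y i j)
        funext i j
        have := congrFun (congrFun heq i) j
        have h2 : min (Nat.floor (emp2 x i j * (m+1))) (m+1)
            = min (Nat.floor (emp2 x' i j * (m+1))) (m+1) := by
          simpa [Fin.ext_iff] using this
        rw [key x, key x'] at h2
        rw [emp2_eq, emp2_eq, h2]
    _ = ((m+2)^n)^n := by simp [Finset.card_univ]
end

section
variable {n m : ℕ}

lemma prEvent_le (μ : Fin n → Fin n → ℝ) (hpos : ∀ i j, 0 < μ i j)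
    (hsum : ∑ i, ∑ j, μ i j = 1) (Γ : Set (Fin n → Fin n → ℝ)) (s : ℝ)
    (hs : ∀ ζ ∈ Γ, s ≤ Dc ζ μ) (m : ℕ) :
    prEvent μ m Γ ≤ (∑ i, ∑ j, marg μ i / μ i j) * (m+1)
      * Real.exp (-(m+1) * s) * (((m+2)^n)^n : ℕ) := by
  classical
  set K := ∑ i, ∑ j, marg μ i / μ i j with hK
  have hK0 : 0 ≤ K := Finset.sum_nonneg fun i _ => Finset.sum_nonneg fun j _ =>
    div_nonneg (Finset.sum_nonneg fun k _ => (hpos i k).le) (hpos i j).le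
  have hC : (0:ℝ) ≤ K * (m+1) * Real.exp (-(m+1) * s) := by positivity
  have hS : (∑ x : Fin (m+1) → Fin n, if emp2 x ∈ Γ then pathP (emp2 x) x else 0)
      ≤ ((((m+2)^n)^n : ℕ) : ℝ) := by
    rw [← Finset.sum_filter]
    set T := (univ : Finset (Fin (m+1) → Fin n)).filter (fun x => emp2 x ∈ Γ) with hT
    rw [← Finset.sum_fiberwise_of_maps_to (g := emp2) (t := T.image emp2)
      (fun x hx => Finset.mem_image_of_mem _ hx) (f := fun x => pathP (emp2 x) x)]
    calc ∑ ν ∈ T.image emp2, ∑ x ∈ T.filter (fun x => emp2 x = ν), pathP (emp2 x) x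
        ≤ ∑ _ν ∈ T.image emp2, 1 := by
          refine Finset.sum_le_sum fun ν hν => ?_
          obtain ⟨x0, _, rfl⟩ := Finset.mem_image.1 hν
          calc ∑ x ∈ T.filter (fun x => emp2 x = emp2 x0), pathP (emp2 x) x
              = ∑ x ∈ T.filter (fun x => emp2 x = emp2 x0), pathP (emp2 x0) x :=
                Finset.sum_congr rfl fun x hx => by rw [(Finset.mem_filter.1 hx).2]
            _ ≤ ∑ x : Fin (m+1) → Fin n, pathP (emp2 x0) x := by
                refine Finset.sum_le_sum_of_subset_of_nonneg (Finset.subset_univ _)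
                  fun x _ _ => pathP_nonneg _ (emp2_nonneg x0) x
            _ ≤ 1 := sum_pathP_le_one (emp2 x0) (emp2_nonneg x0) (sum_emp2 x0).le m
      _ = ((T.image emp2).card : ℝ) := by rw [Finset.sum_const]; simp
      _ ≤ ((((m+2)^n)^n : ℕ) : ℝ) := by exact_mod_cast card_image_emp2 T
  calc prEvent μ m Γ
      ≤ ∑ x : Fin (m+1) → Fin n,
          (if emp2 x ∈ Γ then K * (m+1) * Real.exp (-(m+1) * s) * pathP (emp2 x) x else 0) := by
        unfold prEvent
        refine Finset.sum_le_sum fun x _ => ?_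
        by_cases h : emp2 x ∈ Γ
        · simp only [if_pos h]
          calc pathP μ x ≤ K * (m+1) * Real.exp (-(m+1) * Dc (emp2 x) μ) * pathP (emp2 x) x :=
                key_path μ hpos hsum x
            _ ≤ K * (m+1) * Real.exp (-(m+1) * s) * pathP (emp2 x) x := by
                refine mul_le_mul_of_nonneg_right ?_ (pathP_nonneg _ (emp2_nonneg x) x)
                refine mul_le_mul_of_nonneg_left (Real.exp_le_exp.2 ?_) (by positivity)
                have := hs _ h
                nlinarith [Nat.cast_nonneg (α := ℝ) m]
        · simp [h]
      _ = K * (m+1) * Real.exp (-(m+1) * s)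
          * ∑ x : Fin (m+1) → Fin n, (if emp2 x ∈ Γ then pathP (emp2 x) x else 0) := by
        rw [Finset.mul_sum]
        exact Finset.sum_congr rfl fun x _ => by split <;> simp
      _ ≤ K * (m+1) * Real.exp (-(m+1) * s) * ((((m+2)^n)^n : ℕ) : ℝ) :=
        mul_le_mul_of_nonneg_left hS hC
end
lemma tendsto_rate (K : ℝ) (hK : 0 < K) (c : ℕ) (s : ℝ) :
    Filter.Tendsto (fun m : ℕ => ((m:ℝ)+1)⁻¹ *
      Real.log (K * ((m:ℝ)+1) * Real.exp (-((m:ℝ)+1)*s) * ((((m+2)^c)^c : ℕ) : ℝ)))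
      Filter.atTop (nhds (-s)) := by
  have hm1 : Tendsto (fun m : ℕ => (m:ℝ)+1) atTop atTop :=
    tendsto_atTop_add_const_right _ 1 tendsto_natCast_atTop_atTop
  have hm2 : Tendsto (fun m : ℕ => (m:ℝ)+2) atTop atTop :=
    tendsto_atTop_add_const_right _ 2 tendsto_natCast_atTop_atTop
  have flog : Tendsto (fun x : ℝ => Real.log x / x) atTop (nhds 0) :=
    Real.isLittleO_log_id_atTop.tendsto_div_nhds_zero
  have hinv : Tendsto (fun m : ℕ => ((m:ℝ)+1)⁻¹) atTop (nhds 0) := hm1.inv_tendsto_atTop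
  have f1 : Tendsto (fun m : ℕ => Real.log K * ((m:ℝ)+1)⁻¹) atTop (nhds 0) := by
    simpa using hinv.const_mul (Real.log K)
  have f2 : Tendsto (fun m : ℕ => Real.log ((m:ℝ)+1) / ((m:ℝ)+1)) atTop (nhds 0) :=
    flog.comp hm1
  have fratio : Tendsto (fun m : ℕ => ((m:ℝ)+2) / ((m:ℝ)+1)) atTop (nhds 1) := by
    have : ∀ m : ℕ, ((m:ℝ)+2) / ((m:ℝ)+1) = 1 + ((m:ℝ)+1)⁻¹ := by
      intro m
      have h : ((m:ℝ)+1) ≠ 0 := by positivity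
      field_simp
      ring
    rw [show (fun m : ℕ => ((m:ℝ)+2) / ((m:ℝ)+1)) = fun m : ℕ => 1 + ((m:ℝ)+1)⁻¹ from funext this]
    simpa using tendsto_const_nhds.add hinv
  have f3 : Tendsto (fun m : ℕ => (c:ℝ) * ((c:ℝ) * (Real.log ((m:ℝ)+2) / ((m:ℝ)+1))))
      atTop (nhds 0) := by
    have h1 : Tendsto (fun m : ℕ => Real.log ((m:ℝ)+2) / ((m:ℝ)+2)) atTop (nhds 0) :=
      flog.comp hm2
    have h2 : Tendsto (fun m : ℕ =>
        (Real.log ((m:ℝ)+2) / ((m:ℝ)+2)) * (((m:ℝ)+2) / ((m:ℝ)+1))) atTop (nhds 0) := by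
      simpa using h1.mul fratio
    have h3 : ∀ m : ℕ, (Real.log ((m:ℝ)+2) / ((m:ℝ)+2)) * (((m:ℝ)+2) / ((m:ℝ)+1))
        = Real.log ((m:ℝ)+2) / ((m:ℝ)+1) := by
      intro m
      have ha : ((m:ℝ)+2) ≠ 0 := by positivity
      field_simp
    rw [funext h3] at h2
    simpa using (h2.const_mul (c:ℝ)).const_mul (c:ℝ)
  have heq : ∀ m : ℕ, ((m:ℝ)+1)⁻¹ *
      Real.log (K * ((m:ℝ)+1) * Real.exp (-((m:ℝ)+1)*s) * ((((m+2)^c)^c : ℕ) : ℝ))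
      = Real.log K * ((m:ℝ)+1)⁻¹ + Real.log ((m:ℝ)+1) / ((m:ℝ)+1)
        + (c:ℝ) * ((c:ℝ) * (Real.log ((m:ℝ)+2) / ((m:ℝ)+1))) + (-s) := by
    intro m
    have h1 : ((m:ℝ)+1) ≠ 0 := by positivity
    have h2 : K ≠ 0 := ne_of_gt hK
    have hcast : ((((m+2)^c)^c : ℕ) : ℝ) = (((m:ℝ)+2)^c)^c := by push_cast; ring
    rw [hcast]
    have h3 : ((m:ℝ)+2)^c ≠ 0 := by positivity
    have h4 : (((m:ℝ)+2)^c)^c ≠ 0 := by positivity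
    have h5 : K * ((m:ℝ)+1) ≠ 0 := by positivity
    have h6 : K * ((m:ℝ)+1) * Real.exp (-((m:ℝ)+1)*s) ≠ 0 := by positivity
    rw [Real.log_mul h6 h4, Real.log_mul h5 (Real.exp_ne_zero _), Real.log_mul h2 h1,
      Real.log_exp, Real.log_pow, Real.log_pow]
    field_simp
    ring
  rw [funext heq]
  have := ((f1.add f2).add f3).add (tendsto_const_nhds (x := -s))
  simpa using this
/-- For a stationary Markov chain with strictly positive doublet
frequency vector `μ ∈ M_s(A²)`, for EVERY subset `Γ ⊆ M_s(A²)` (not necessarily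
closed), `limsup_{l→∞} (1/l) log Pr{ν(x_1^l) ∈ Γ} ≤ −inf_{ζ∈Γ} D_c(ζ‖μ)`. -/
theorem stmt10 {n : ℕ} (μ : Fin n → Fin n → ℝ)
    (hμ : μ ∈ Ms2 n) (hpos : ∀ i j, 0 < μ i j)
    (Γ : Set (Fin n → Fin n → ℝ)) (hΓ : Γ ⊆ Ms2 n) :
    Filter.limsup
      (fun m : ℕ => ((((m:ℝ)+1)⁻¹ : ℝ) : EReal) * elog (prEvent μ m Γ))
      Filter.atTop
    ≤ -(⨅ ζ ∈ Γ, ((Dc ζ μ : ℝ) : EReal)) := by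
  classical
  have hsum : ∑ i, ∑ j, μ i j = 1 := hμ.1.2
  have hn0 : n ≠ 0 := by
    rintro rfl
    simpa using hsum
  haveI : Nonempty (Fin n) := ⟨⟨0, Nat.pos_of_ne_zero hn0⟩⟩
  set K := ∑ i, ∑ j, marg μ i / μ i j with hKdef
  have hmargμ : ∀ i, 0 < marg μ i :=
    fun i => Finset.sum_pos (fun j _ => hpos i j) univ_nonempty
  have hKpos : 0 < K :=
    Finset.sum_pos (fun i _ => Finset.sum_pos
      (fun j _ => div_pos (hmargμ i) (hpos i j)) univ_nonempty) univ_nonempty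
  by_contra hcon
  push_neg at hcon
  obtain ⟨r, hr1, hr2⟩ := EReal.exists_between_coe_real hcon
  set s : ℝ := -r with hsdef
  have hs : ∀ ζ ∈ Γ, s ≤ Dc ζ μ := by
    intro ζ hζ
    have h1 : -((r:ℝ) : EReal) < ⨅ ζ ∈ Γ, ((Dc ζ μ : ℝ) : EReal) := EReal.neg_lt_of_neg_lt hr1
    have h2 : (⨅ ζ ∈ Γ, ((Dc ζ μ : ℝ) : EReal)) ≤ ((Dc ζ μ : ℝ) : EReal) := iInf₂_le ζ hζ
    have h3 : ((s : ℝ) : EReal) < ((Dc ζ μ : ℝ) : EReal) := by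
      rw [hsdef, EReal.coe_neg]
      exact lt_of_lt_of_le h1 h2
    exact (EReal.coe_lt_coe_iff.1 h3).le
  -- the upper bound sequence
  set a : ℕ → ℝ := fun m => ((m:ℝ)+1)⁻¹ *
    Real.log (K * ((m:ℝ)+1) * Real.exp (-((m:ℝ)+1)*s) * ((((m+2)^n)^n : ℕ) : ℝ)) with hadef
  have hub : ∀ m : ℕ, ((((m:ℝ)+1)⁻¹ : ℝ) : EReal) * elog (prEvent μ m Γ)
      ≤ ((a m : ℝ) : EReal) := by
    intro m
    have hB : (0:ℝ) < K * ((m:ℝ)+1) * Real.exp (-((m:ℝ)+1)*s) * ((((m+2)^n)^n : ℕ) : ℝ) := by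
      have : (0:ℝ) < ((((m+2)^n)^n : ℕ) : ℝ) := by positivity
      positivity
    have hble := prEvent_le μ hpos hsum Γ s hs m
    by_cases hp : prEvent μ m Γ ≤ 0
    · rw [elog, if_pos hp, EReal.coe_mul_bot_of_pos (by positivity)]
      exact bot_le
    · push_neg at hp
      rw [elog, if_neg (not_le.2 hp), ← EReal.coe_mul, EReal.coe_le_coe_iff]
      refine mul_le_mul_of_nonneg_left ?_ (by positivity)
      refine Real.log_le_log hp ?_
      calc prEvent μ m Γ ≤ K * ((m:ℕ)+1) * Real.exp (-((m:ℕ)+1) * s) * (((m+2)^n)^n : ℕ) :=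
            hble
        _ = K * ((m:ℝ)+1) * Real.exp (-((m:ℝ)+1)*s) * ((((m+2)^n)^n : ℕ) : ℝ) := by push_cast; ring
    -- (above)
  have hlim : Tendsto a atTop (nhds (-s)) := tendsto_rate K hKpos n s
  have hlimE : Tendsto (fun m => ((a m : ℝ) : EReal)) atTop (nhds ((-s : ℝ) : EReal)) :=
    EReal.tendsto_coe.2 hlim
  have hle : Filter.limsup
      (fun m : ℕ => ((((m:ℝ)+1)⁻¹ : ℝ) : EReal) * elog (prEvent μ m Γ)) Filter.atTop
      ≤ Filter.limsup (fun m => ((a m : ℝ) : EReal)) Filter.atTop :=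
    Filter.limsup_le_limsup (Filter.Eventually.of_forall hub)
  rw [hlimE.limsup_eq] at hle
  have hfin : ((-s : ℝ) : EReal) = ((r : ℝ) : EReal) := by rw [hsdef]; norm_num
  rw [hfin] at hle
  exact absurd (lt_of_lt_of_le hr2 hle) (lt_irrefl _)
end

section
/- Let μ ∈ M_s(A²) with μ_{ij} > 0 for all i, j ∈ A = {1,...,n}, let a_{ij} = μ_{ij}/μ̄_i be the associated transition matrix, and let φ ∈ S_n. Then inf{ D_c(ν‖μ) : ν ∈ M_s(A²), ν̄ = φ } = sup_{u > 0} Σ_{i=1}^n φ_i log(u_i / (Au)_i), where the supremum is over u ∈ ℝ^n with u_i > 0 for all i and (Au)_i = Σ_j a_{ij} u_j. -/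
open Finset

/-- The simplex `S_n` of probability vectors. -/
def simplex (n : ℕ) : Set (Fin n → ℝ) := {p | (∀ i, 0 ≤ p i) ∧ ∑ i, p i = 1}

open Real Filter

lemma weak_duality {n : ℕ} (hn : 0 < n) (μ : Fin n → Fin n → ℝ)
    (hpos : ∀ i j, 0 < μ i j) (ν : Fin n → Fin n → ℝ) (hν : ν ∈ Ms2 n)
    (u : Fin n → ℝ) (hu : ∀ i, 0 < u i) :
    ∑ i, (marg ν) i * Real.log (u i / ∑ j, (μ i j / marg μ i) * u j) ≤ Dc ν μ := by
  haveI : NeZero n := ⟨hn.ne'⟩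
  set φ : Fin n → ℝ := marg ν with hφdef
  set m : Fin n → ℝ := marg μ with hmdef
  set A : Fin n → ℝ := fun i => ∑ j, (μ i j / m i) * u j with hAdef
  have hm : ∀ i, 0 < m i := fun i => Finset.sum_pos (fun j _ => hpos i j) univ_nonempty
  have ha : ∀ i j, 0 < μ i j / m i := fun i j => div_pos (hpos i j) (hm i)
  have hA : ∀ i, 0 < A i := fun i =>
    Finset.sum_pos (fun j _ => mul_pos (ha i j) (hu j)) univ_nonempty
  have hνnn : ∀ i j, 0 ≤ ν i j := hν.1.1
  have hrow : ∀ i, ∑ j, ν i j = φ i := fun i => rfl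
  have hcol : ∀ i, ∑ j, ν j i = φ i := fun i => (hν.2 i).symm
  have hφnn : ∀ i, 0 ≤ φ i := fun i => Finset.sum_nonneg fun j _ => hνnn i j
  have hνle : ∀ i j, ν i j ≤ φ i := fun i j =>
    Finset.single_le_sum (fun k _ => hνnn i k) (mem_univ j)
  -- rewrite LHS
  have hLHS : ∑ i, φ i * Real.log (u i / A i)
      = ∑ i, ∑ j, ν i j * (Real.log (u j) - Real.log (A i)) := by
    have : ∀ i, φ i * Real.log (u i / A i) = φ i * Real.log (u i) - φ i * Real.log (A i) := by
      intro i
      rw [Real.log_div (hu i).ne' (hA i).ne', mul_sub]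
    rw [Finset.sum_congr rfl fun i _ => this i]
    rw [Finset.sum_sub_distrib]
    have h1 : ∑ i, φ i * Real.log (u i) = ∑ i, ∑ j, ν i j * Real.log (u j) := by
      rw [Finset.sum_comm]
      refine Finset.sum_congr rfl fun i _ => ?_
      rw [← Finset.sum_mul, hcol i]
    have h2 : ∑ i, φ i * Real.log (A i) = ∑ i, ∑ j, ν i j * Real.log (A i) := by
      refine Finset.sum_congr rfl fun i _ => ?_
      rw [← Finset.sum_mul, hrow i]
    rw [h1, h2, ← Finset.sum_sub_distrib]
    refine Finset.sum_congr rfl fun i _ => ?_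
    rw [← Finset.sum_sub_distrib]
    refine Finset.sum_congr rfl fun j _ => ?_
    ring
  have hD1 : DKL1 φ m = ∑ i, ∑ j, ν i j * Real.log (φ i / m i) := by
    refine Finset.sum_congr rfl fun i _ => ?_
    rw [← Finset.sum_mul, hrow i]
  rw [hLHS, Dc, hD1, DKL2]
  rw [← sub_nonneg]
  have key : (∑ i, ∑ j, ν i j * Real.log (ν i j / μ i j))
        - (∑ i, ∑ j, ν i j * Real.log (φ i / m i))
        - ∑ i, ∑ j, ν i j * (Real.log (u j) - Real.log (A i))
      = ∑ i, ∑ j, (ν i j * (Real.log (ν i j / μ i j) - Real.log (φ i / m i)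
          - Real.log (u j) + Real.log (A i))) := by
    rw [← Finset.sum_sub_distrib, ← Finset.sum_sub_distrib]
    refine Finset.sum_congr rfl fun i _ => ?_
    rw [← Finset.sum_sub_distrib, ← Finset.sum_sub_distrib]
    refine Finset.sum_congr rfl fun j _ => ?_
    ring
  have key2 : DKL2 ν μ - DKL1 φ m - ∑ i, ∑ j, ν i j * (Real.log (u j) - Real.log (A i))
      = ∑ i, ∑ j, (ν i j * (Real.log (ν i j / μ i j) - Real.log (φ i / m i)
          - Real.log (u j) + Real.log (A i))) := by
    rw [DKL2, hD1]; exact key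
  rw [key]
  -- termwise comparison with s i j = φ i * (a i j * u j / A i)
  have hterm : ∀ i ∈ univ, ∀ j ∈ univ,
      ν i j - φ i * ((μ i j / m i) * u j / A i)
        ≤ ν i j * (Real.log (ν i j / μ i j) - Real.log (φ i / m i)
            - Real.log (u j) + Real.log (A i)) := by
    intro i _ j _
    have hsnn : 0 ≤ φ i * ((μ i j / m i) * u j / A i) :=
      mul_nonneg (hφnn i) (div_nonneg (mul_nonneg (ha i j).le (hu j).le) (hA i).le)
    rcases eq_or_lt_of_le (hνnn i j) with h0 | hν0
    · rw [← h0]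
      simpa using hsnn
    · have hφi : 0 < φ i := lt_of_lt_of_le hν0 (hνle i j)
      have hsij : 0 < φ i * ((μ i j / m i) * u j / A i) :=
        mul_pos hφi (div_pos (mul_pos (ha i j) (hu j)) (hA i))
      have hbr : Real.log (ν i j / μ i j) - Real.log (φ i / m i)
          - Real.log (u j) + Real.log (A i)
          = -(Real.log ((φ i * ((μ i j / m i) * u j / A i)) / ν i j)) := by
        rw [Real.log_div hsij.ne' hν0.ne',
          Real.log_mul hφi.ne' (div_pos (mul_pos (ha i j) (hu j)) (hA i)).ne',
          Real.log_div (mul_pos (ha i j) (hu j)).ne' (hA i).ne',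
          Real.log_mul (ha i j).ne' (hu j).ne',
          Real.log_div (hpos i j).ne' (hm i).ne',
          Real.log_div hν0.ne' (hpos i j).ne',
          Real.log_div hφi.ne' (hm i).ne']
        ring
      rw [hbr]
      have hlog := Real.log_le_sub_one_of_pos (div_pos hsij hν0)
      calc ν i j - φ i * ((μ i j / m i) * u j / A i)
          = ν i j * (1 - (φ i * ((μ i j / m i) * u j / A i)) / ν i j) := by
            rw [mul_sub, mul_one, mul_div_cancel₀ _ hν0.ne']
        _ ≤ ν i j * (-(Real.log ((φ i * ((μ i j / m i) * u j / A i)) / ν i j))) := by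
            apply mul_le_mul_of_nonneg_left _ hν0.le
            linarith
  have hsum0 : ∑ i, ∑ j, (ν i j - φ i * ((μ i j / m i) * u j / A i)) = 0 := by
    have h1 : ∀ i, ∑ j, φ i * ((μ i j / m i) * u j / A i) = φ i := by
      intro i
      have e : ∀ j, φ i * ((μ i j / m i) * u j / A i)
          = (φ i / A i) * ((μ i j / m i) * u j) := fun j => by ring
      rw [Finset.sum_congr rfl fun j _ => e j, ← Finset.mul_sum]
      exact div_mul_cancel₀ _ (hA i).ne'
    have : ∀ i, ∑ j, (ν i j - φ i * ((μ i j / m i) * u j / A i)) = 0 := by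
      intro i
      rw [Finset.sum_sub_distrib, hrow i, h1 i, sub_self]
    simp [this]
  calc (0:ℝ) = ∑ i, ∑ j, (ν i j - φ i * ((μ i j / m i) * u j / A i)) := hsum0.symm
    _ ≤ _ := Finset.sum_le_sum fun i hi => Finset.sum_le_sum fun j hj => hterm i hi j hj

lemma exists_max {n : ℕ} (S : Finset (Fin n)) (hS : S.Nonempty)
    (a : Fin n → Fin n → ℝ) (ha : ∀ i j, 0 < a i j) (harow : ∀ i, ∑ j, a i j = 1)
    (φ : Fin n → ℝ) (hφpos : ∀ i ∈ S, 0 < φ i) (hφsum : ∑ i ∈ S, φ i = 1) :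
    ∃ w : Fin n → ℝ, (∀ i, 0 < w i) ∧
      ∀ u : Fin n → ℝ, (∀ i ∈ S, 0 < u i) →
        (∑ i ∈ S, φ i * Real.log (u i / ∑ j ∈ S, a i j * u j))
          ≤ ∑ i ∈ S, φ i * Real.log (w i / ∑ j ∈ S, a i j * w j) := by
  classical
  have ⟨i0, hi0⟩ := hS
  set D : (Fin n → ℝ) → Fin n → ℝ := fun u i => ∑ j ∈ S, a i j * u j with hDdef
  set F : (Fin n → ℝ) → ℝ := fun u => ∑ i ∈ S, φ i * Real.log (u i / D u i) with hFdef
  have hφnn : ∀ i ∈ S, 0 ≤ φ i := fun i hi => (hφpos i hi).le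
  have hDpos : ∀ (u : Fin n → ℝ), (∀ i ∈ S, 0 < u i) → ∀ i, 0 < D u i := by
    intro u hu i
    exact Finset.sum_pos (fun j hj => mul_pos (ha i j) (hu j hj)) ⟨i0, hi0⟩
  -- lower bound on the transition probabilities
  set a0 : ℝ := (S ×ˢ S).inf' (hS.product hS) (fun p => a p.1 p.2) with ha0def
  have ha0pos : 0 < a0 := by
    obtain ⟨p, hp, hpe⟩ := Finset.exists_mem_eq_inf' (hS.product hS) (fun p => a p.1 p.2)
    rw [ha0def, hpe]; exact ha p.1 p.2
  have ha0le : ∀ i ∈ S, ∀ j ∈ S, a0 ≤ a i j := fun i hi j hj =>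
    Finset.inf'_le (fun p => a p.1 p.2) (Finset.mem_product.2 (⟨hi, hj⟩ : i ∈ S ∧ j ∈ S) : ((i, j) : Fin n × Fin n) ∈ S ×ˢ S)
  have ha0le1 : a0 ≤ 1 := by
    calc a0 ≤ a i0 i0 := ha0le i0 hi0 i0 hi0
      _ ≤ ∑ j, a i0 j := Finset.single_le_sum (fun j _ => (ha i0 j).le) (mem_univ i0)
      _ = 1 := harow i0
  -- bound (B)
  have boundB : ∀ u : Fin n → ℝ, (∀ i ∈ S, 0 < u i) → (∀ i ∈ S, u i ≤ 1) →
      (∃ k ∈ S, u k = 1) → ∀ i ∈ S, F u ≤ φ i * Real.log (u i) - Real.log a0 := by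
    rintro u hu hu1 ⟨k, hk, huk⟩ i hi
    have hDlb : ∀ l ∈ S, a0 ≤ D u l := by
      intro l hl
      calc a0 = a0 * u k := by rw [huk, mul_one]
        _ ≤ a l k * u k := mul_le_mul_of_nonneg_right (ha0le l hl k hk) (hu k hk).le
        _ ≤ D u l := Finset.single_le_sum (fun j hj => mul_nonneg (ha l j).le (hu j hj).le) hk
    have hlognp : ∀ l ∈ S, Real.log (u l) ≤ 0 := fun l hl =>
      Real.log_nonpos (hu l hl).le (hu1 l hl)
    have step1 : F u ≤ (∑ l ∈ S, φ l * Real.log (u l)) - Real.log a0 := by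
      have : ∀ l ∈ S, φ l * Real.log (u l / D u l)
          ≤ φ l * Real.log (u l) - φ l * Real.log a0 := by
        intro l hl
        rw [Real.log_div (hu l hl).ne' (hDpos u hu l).ne', mul_sub]
        have := Real.log_le_log ha0pos (hDlb l hl)
        nlinarith [hφnn l hl]
      calc F u ≤ ∑ l ∈ S, (φ l * Real.log (u l) - φ l * Real.log a0) :=
            Finset.sum_le_sum this
        _ = (∑ l ∈ S, φ l * Real.log (u l)) - (∑ l ∈ S, φ l) * Real.log a0 := by
            rw [Finset.sum_sub_distrib, Finset.sum_mul]
        _ = (∑ l ∈ S, φ l * Real.log (u l)) - Real.log a0 := by rw [hφsum, one_mul]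
    have step2 : ∑ l ∈ S, φ l * Real.log (u l) ≤ φ i * Real.log (u i) := by
      rw [← Finset.add_sum_erase S _ hi]
      have : ∑ l ∈ S.erase i, φ l * Real.log (u l) ≤ 0 :=
        Finset.sum_nonpos fun l hl =>
          mul_nonpos_of_nonneg_of_nonpos (hφnn l (Finset.mem_of_mem_erase hl))
            (hlognp l (Finset.mem_of_mem_erase hl))
      linarith
    linarith
  -- constants
  set c0 : ℝ := F (fun _ => 1) with hc0def
  have hc0 : c0 + Real.log a0 ≤ 0 := by
    have := boundB (fun _ => 1) (fun i _ => one_pos) (fun i _ => le_refl 1)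
      ⟨i0, hi0, rfl⟩ i0 hi0
    simp only [Real.log_one, mul_zero, zero_sub] at this
    linarith
  set φ0 : ℝ := S.inf' hS φ with hφ0def
  have hφ0pos : 0 < φ0 := by
    obtain ⟨l, hl, hle⟩ := Finset.exists_mem_eq_inf' hS φ
    rw [hφ0def, hle]; exact hφpos l hl
  have hφ0le : ∀ i ∈ S, φ0 ≤ φ i := fun i hi => Finset.inf'_le φ hi
  set L : ℝ := (c0 + Real.log a0) / φ0 with hLdef
  have hL : L ≤ 0 := div_nonpos_of_nonpos_of_nonneg hc0 hφ0pos.le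
  set δ : ℝ := Real.exp L with hδdef
  have hδpos : 0 < δ := Real.exp_pos L
  have hδ1 : δ ≤ 1 := Real.exp_le_one_iff.2 hL
  -- compact box
  set K : Set (Fin n → ℝ) := Set.Icc (fun _ => δ) (fun _ => 1) with hKdef
  have hKmem : ∀ v : Fin n → ℝ, v ∈ K ↔ (∀ i, δ ≤ v i) ∧ (∀ i, v i ≤ 1) := by
    intro v
    constructor
    · rintro ⟨h1, h2⟩; exact ⟨fun i => h1 i, fun i => h2 i⟩
    · rintro ⟨h1, h2⟩; exact ⟨fun i => h1 i, fun i => h2 i⟩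
  have hKc : IsCompact K := isCompact_Icc
  have h1K : (fun _ => (1:ℝ)) ∈ K := (hKmem _).2 ⟨fun i => hδ1, fun i => le_refl 1⟩
  have hKpos : ∀ v ∈ K, ∀ i, (0:ℝ) < v i := fun v hv i =>
    lt_of_lt_of_le hδpos (((hKmem v).1 hv).1 i)
  have hFcont : ContinuousOn F K := by
    apply continuousOn_finset_sum
    intro i _
    apply ContinuousOn.mul continuousOn_const
    apply ContinuousOn.log
    · apply ContinuousOn.div
      · exact (continuous_apply i).continuousOn
      · apply continuousOn_finset_sum
        intro j _
        exact (continuous_const.mul (continuous_apply j)).continuousOn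
      · intro v hv
        exact (hDpos v (fun l _ => hKpos v hv l) i).ne'
    · intro v hv
      exact (div_pos (hKpos v hv i) (hDpos v (fun l _ => hKpos v hv l) i)).ne'
  obtain ⟨w, hwK, hwmax⟩ := hKc.exists_isMaxOn ⟨_, h1K⟩ hFcont
  have hwpos : ∀ i, 0 < w i := hKpos w hwK
  refine ⟨w, hwpos, ?_⟩
  -- scaling invariance
  have hFscale : ∀ (u : Fin n → ℝ), ∀ c : ℝ, 0 < c → F (fun i => c * u i) = F u := by
    intro u c hc
    apply Finset.sum_congr rfl
    intro i _
    congr 1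
    have hDc : D (fun i => c * u i) i = c * D u i := by
      rw [hDdef]; simp only []
      rw [Finset.mul_sum]
      exact Finset.sum_congr rfl fun j _ => by ring
    rw [hDc]
    rw [mul_div_mul_left _ _ hc.ne']
  have hFcongr : ∀ u v : Fin n → ℝ, (∀ i ∈ S, u i = v i) → F u = F v := by
    intro u v h
    apply Finset.sum_congr rfl
    intro i hi
    rw [h i hi]
    have hD : D u i = D v i := Finset.sum_congr rfl fun j hj => by rw [h j hj]
    rw [hD]
  -- global maximality
  intro u hu
  show F u ≤ F w
  set M : ℝ := S.sup' hS u with hMdef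
  obtain ⟨k, hk, hMk⟩ := Finset.exists_mem_eq_sup' hS u
  have hMpos : 0 < M := by rw [hMdef, hMk]; exact hu k hk
  set u' : Fin n → ℝ := fun i => if i ∈ S then u i / M else 1 with hu'def
  have hu'pos : ∀ i ∈ S, 0 < u' i := by
    intro i hi
    simp only [hu'def, if_pos hi]
    exact div_pos (hu i hi) hMpos
  have hu'le : ∀ i ∈ S, u' i ≤ 1 := by
    intro i hi
    simp only [hu'def, if_pos hi]
    rw [div_le_one hMpos]
    exact Finset.le_sup' u hi
  have hu'k : u' k = 1 := by
    simp only [hu'def, if_pos hk]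
    rw [div_eq_one_iff_eq hMpos.ne']
    exact hMk.symm
  have hFu' : F u' = F u := by
    have h1 : F u' = F (fun i => M⁻¹ * u i) := by
      apply hFcongr
      intro i hi
      simp only [hu'def, if_pos hi]
      rw [div_eq_inv_mul]
    rw [h1, hFscale u M⁻¹ (inv_pos.2 hMpos)]
  by_cases hcase : c0 ≤ F u'
  · have hbd := boundB u' hu'pos hu'le ⟨k, hk, hu'k⟩
    have hu'K : u' ∈ K := by
      rw [hKmem]
      constructor
      · intro i
        by_cases hi : i ∈ S
        · have h1 : F u' ≤ φ i * Real.log (u' i) - Real.log a0 := hbd i hi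
          have h2 : c0 + Real.log a0 ≤ φ i * Real.log (u' i) := by linarith
          have h3 : L ≤ Real.log (u' i) := by
            rw [hLdef, div_le_iff₀ hφ0pos]
            calc c0 + Real.log a0 ≤ φ i * Real.log (u' i) := h2
              _ ≤ Real.log (u' i) * φ0 := by
                  have hli : Real.log (u' i) ≤ 0 :=
                    Real.log_nonpos (hu'pos i hi).le (hu'le i hi)
                  nlinarith [hφ0le i hi, hφpos i hi]
          calc δ = Real.exp L := hδdef
            _ ≤ Real.exp (Real.log (u' i)) := Real.exp_le_exp.2 h3
            _ = u' i := Real.exp_log (hu'pos i hi)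
        · simp only [hu'def, if_neg hi]; exact hδ1
      · intro i
        by_cases hi : i ∈ S
        · exact hu'le i hi
        · simp only [hu'def, if_neg hi]
          exact le_refl 1
    rw [← hFu']
    exact hwmax hu'K
  · push_neg at hcase
    rw [← hFu']
    calc F u' ≤ c0 := hcase.le
      _ ≤ F w := hwmax h1K

lemma first_order {n : ℕ} (S : Finset (Fin n)) (hS : S.Nonempty)
    (a : Fin n → Fin n → ℝ) (ha : ∀ i j, 0 < a i j)
    (φ : Fin n → ℝ)
    (w : Fin n → ℝ) (hw : ∀ i, 0 < w i)
    (hmax : ∀ u : Fin n → ℝ, (∀ i ∈ S, 0 < u i) →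
        (∑ i ∈ S, φ i * Real.log (u i / ∑ j ∈ S, a i j * u j))
          ≤ ∑ i ∈ S, φ i * Real.log (w i / ∑ j ∈ S, a i j * w j))
    (k : Fin n) (hk : k ∈ S) :
    w k * ∑ i ∈ S, φ i * a i k / (∑ j ∈ S, a i j * w j) = φ k := by
  classical
  set D : Fin n → ℝ := fun i => ∑ j ∈ S, a i j * w j with hDdef
  have hDpos : ∀ i, 0 < D i :=
    fun i => Finset.sum_pos (fun j hj => mul_pos (ha i j) (hw j)) hS
  set C : Fin n → ℝ := fun i => ∑ j ∈ S.erase k, a i j * w j with hCdef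
  have hCnn : ∀ i, 0 ≤ C i :=
    fun i => Finset.sum_nonneg fun j _ => (mul_pos (ha i j) (hw j)).le
  have hCD : ∀ i, C i + a i k * w k = D i := by
    intro i
    rw [hDdef, hCdef]
    simp only []
    rw [add_comm]
    exact Finset.add_sum_erase S (fun j => a i j * w j) hk
  set g : ℝ → ℝ := fun x => ∑ i ∈ S,
      φ i * (Real.log (if i = k then x else w i) - Real.log (C i + a i k * x)) with hgdef
  -- g agrees with F ∘ update on positive x
  have hgF : ∀ x : ℝ, 0 < x → g x = ∑ i ∈ S,
      φ i * Real.log ((Function.update w k x) i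
        / ∑ j ∈ S, a i j * (Function.update w k x) j) := by
    intro x hx
    apply Finset.sum_congr rfl
    intro i hi
    have he : (Function.update w k x) i = if i = k then x else w i :=
      Function.update_apply w k x i
    have hepos : (0:ℝ) < if i = k then x else w i := by
      split <;> [exact hx; exact hw i]
    have hsum : ∑ j ∈ S, a i j * (Function.update w k x) j = C i + a i k * x := by
      rw [← Finset.add_sum_erase S _ hk, Function.update_self, add_comm]
      congr 1
      apply Finset.sum_congr rfl
      intro j hj
      rw [Function.update_of_ne (Finset.ne_of_mem_erase hj)]
    rw [he, hsum, Real.log_div hepos.ne']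
    have : (0:ℝ) < C i + a i k * x :=
      add_pos_of_nonneg_of_pos (hCnn i) (mul_pos (ha i k) hx)
    exact this.ne'
  have hgwk : g (w k) = ∑ i ∈ S, φ i * Real.log (w i / D i) := by
    rw [hgF (w k) (hw k)]
    apply Finset.sum_congr rfl
    intro i hi
    rw [Function.update_eq_self]
  -- local maximality
  have hloc : IsLocalMax g (w k) := by
    have hev : ∀ᶠ x in nhds (w k), 0 < x := eventually_gt_nhds (hw k)
    filter_upwards [hev] with x hx
    rw [hgF x hx, hgwk]
    apply hmax
    intro i hi
    rw [Function.update_apply]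
    split <;> [exact hx; exact hw i]
  -- derivative
  have hderiv : HasDerivAt g
      (∑ i ∈ S, φ i * ((if i = k then (w k)⁻¹ else 0) - a i k / D i)) (w k) := by
    apply HasDerivAt.fun_sum
    intro i hi
    have hD2 : HasDerivAt (fun x : ℝ => Real.log (C i + a i k * x)) (a i k / D i) (w k) := by
      have h1 : HasDerivAt (fun x : ℝ => C i + a i k * x) (a i k) (w k) := by
        simpa using (hasDerivAt_id (w k)).const_mul (a i k) |>.const_add (C i)
      have h2 := h1.log (by rw [hCD i]; exact (hDpos i).ne')
      simpa [hCD i] using h2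
    rcases eq_or_ne i k with rfl | hik
    · simp only [if_pos rfl]
      exact ((Real.hasDerivAt_log (hw i).ne').sub hD2).const_mul (φ i)
    · simp only [if_neg hik]
      exact ((hasDerivAt_const (w k) (Real.log (w i))).sub hD2).const_mul (φ i)
  have hzero := hloc.hasDerivAt_eq_zero hderiv
  have hsplit : ∑ i ∈ S, φ i * ((if i = k then (w k)⁻¹ else 0) - a i k / D i)
      = φ k * (w k)⁻¹ - ∑ i ∈ S, φ i * a i k / D i := by
    have e : ∀ i ∈ S, φ i * ((if i = k then (w k)⁻¹ else 0) - a i k / D i)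
        = (if i = k then φ k * (w k)⁻¹ else 0) - φ i * a i k / D i := by
      intro i _
      by_cases h : i = k
      · subst h; rw [if_pos rfl, if_pos rfl]; ring
      · rw [if_neg h, if_neg h]; ring
    rw [Finset.sum_congr rfl e, Finset.sum_sub_distrib, Finset.sum_ite_eq' S k, if_pos hk]
  rw [hsplit] at hzero
  have hT : ∑ i ∈ S, φ i * a i k / D i = φ k * (w k)⁻¹ := by linarith
  rw [hT, ← mul_assoc, mul_comm (w k) (φ k), mul_assoc, mul_inv_cancel₀ (hw k).ne', mul_one]

lemma exists_opt {n : ℕ} (μ : Fin n → Fin n → ℝ) (hpos : ∀ i j, 0 < μ i j)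
    (φ : Fin n → ℝ) (hφ0 : ∀ i, 0 ≤ φ i) (hφ1 : ∑ i, φ i = 1) :
    ∃ ν, (ν ∈ Ms2 n ∧ marg ν = φ) ∧ ∀ c : ℝ, c < Dc ν μ →
      ∃ u : Fin n → ℝ, (∀ i, 0 < u i) ∧
        c < ∑ i, φ i * Real.log (u i / ∑ j, (μ i j / marg μ i) * u j) := by
  classical
  have hex : ∃ i, φ i ≠ 0 := by
    by_contra h
    push_neg at h
    have : ∑ i, φ i = 0 := Finset.sum_eq_zero fun i _ => h i
    rw [this] at hφ1
    exact zero_ne_one hφ1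
  obtain ⟨i0, hi0⟩ := hex
  haveI : Nonempty (Fin n) := ⟨i0⟩
  set S : Finset (Fin n) := univ.filter (fun i => φ i ≠ 0) with hSdef
  have hS : S.Nonempty := ⟨i0, Finset.mem_filter.2 ⟨mem_univ _, hi0⟩⟩
  have hφSpos : ∀ i ∈ S, 0 < φ i := fun i hi =>
    lt_of_le_of_ne (hφ0 i) (Ne.symm (Finset.mem_filter.1 hi).2)
  have hφoff : ∀ i, i ∉ S → φ i = 0 := by
    intro i hi
    by_contra h
    exact hi (Finset.mem_filter.2 ⟨mem_univ _, h⟩)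
  have hφsumS : ∑ i ∈ S, φ i = 1 := by
    rw [Finset.sum_subset (Finset.subset_univ S) (fun i _ hi => hφoff i hi)]
    exact hφ1
  set m : Fin n → ℝ := marg μ with hmdef
  have hm : ∀ i, 0 < m i := fun i => Finset.sum_pos (fun j _ => hpos i j) univ_nonempty
  set a : Fin n → Fin n → ℝ := fun i j => μ i j / m i with hadef
  have hapos : ∀ i j, 0 < a i j := fun i j => div_pos (hpos i j) (hm i)
  have harow : ∀ i, ∑ j, a i j = 1 := by
    intro i
    rw [hadef]
    simp only []
    rw [← Finset.sum_div]
    exact div_self (hm i).ne'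
  obtain ⟨w, hwpos, hwmax⟩ := exists_max S hS a hapos harow φ hφSpos hφsumS
  set D : Fin n → ℝ := fun i => ∑ j ∈ S, a i j * w j with hDdef
  have hDpos : ∀ i, 0 < D i :=
    fun i => Finset.sum_pos (fun j _ => mul_pos (hapos i j) (hwpos j)) hS
  have hfoc : ∀ k ∈ S, w k * ∑ i ∈ S, φ i * a i k / D i = φ k :=
    fun k hk => first_order S hS a hapos φ w hwpos hwmax k hk
  set Fw : ℝ := ∑ i ∈ S, φ i * Real.log (w i / D i) with hFwdef
  -- the candidate measure
  set ν : Fin n → Fin n → ℝ :=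
    fun i j => if i ∈ S ∧ j ∈ S then φ i * (a i j * w j / D i) else 0 with hνdef
  have hνnn : ∀ i j, 0 ≤ ν i j := by
    intro i j
    rw [hνdef]
    simp only []
    rcases em (i ∈ S ∧ j ∈ S) with h | h
    · rw [if_pos h]
      exact mul_nonneg (hφSpos i h.1).le
        (div_nonneg (mul_nonneg (hapos i j).le (hwpos j).le) (hDpos i).le)
    · rw [if_neg h]
  have hrow : ∀ i, ∑ j, ν i j = φ i := by
    intro i
    by_cases hi : i ∈ S
    · have e : ∀ j, ν i j = if j ∈ S then φ i * (a i j * w j / D i) else 0 := by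
        intro j
        rw [hνdef]
        simp only [hi, true_and]
      rw [Finset.sum_congr rfl fun j _ => e j, Finset.sum_ite_mem, univ_inter]
      have e2 : ∀ j ∈ S, φ i * (a i j * w j / D i) = (φ i / D i) * (a i j * w j) :=
        fun j _ => by ring
      rw [Finset.sum_congr rfl e2, ← Finset.mul_sum]
      show φ i / D i * D i = φ i
      exact div_mul_cancel₀ _ (hDpos i).ne'
    · have e : ∀ j, ν i j = 0 := by
        intro j
        rw [hνdef]
        simp only [hi, false_and, if_false]
      rw [Finset.sum_congr rfl fun j _ => e j, Finset.sum_const_zero, hφoff i hi]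
  have hcol : ∀ k, ∑ i, ν i k = φ k := by
    intro k
    by_cases hk : k ∈ S
    · have e : ∀ i, ν i k = if i ∈ S then w k * (φ i * a i k / D i) else 0 := by
        intro i
        rw [hνdef]
        simp only [hk, and_true]
        split
        · ring
        · rfl
      rw [Finset.sum_congr rfl fun i _ => e i, Finset.sum_ite_mem, univ_inter,
        ← Finset.mul_sum, hfoc k hk]
    · have e : ∀ i, ν i k = 0 := by
        intro i
        rw [hνdef]
        simp only [hk, and_false, if_false]
      rw [Finset.sum_congr rfl fun i _ => e i, Finset.sum_const_zero, hφoff k hk]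
  have hmarg : marg ν = φ := funext fun i => hrow i
  have hMs2 : ν ∈ Ms2 n := by
    refine ⟨⟨hνnn, ?_⟩, ?_⟩
    · rw [Finset.sum_congr rfl fun i (_ : i ∈ univ) => hrow i]
      exact hφ1
    · intro i
      rw [hrow i, hcol i]
  -- value of Dc
  have hDc : Dc ν μ = Fw := by
    have hkey : ∀ i j, ν i j * Real.log (ν i j / μ i j)
        = ν i j * (Real.log (φ i / m i) + Real.log (w j) - Real.log (D i)) := by
      intro i j
      rcases em (i ∈ S ∧ j ∈ S) with h | h
      · have hν : ν i j = φ i * (a i j * w j / D i) := by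
          simp only [hνdef]
          rw [if_pos h]
        have hφi := hφSpos i h.1
        have haw : 0 < a i j * w j := mul_pos (hapos i j) (hwpos j)
        have hawD : 0 < a i j * w j / D i := div_pos haw (hDpos i)
        congr 1
        rw [hν, Real.log_div (mul_pos hφi hawD).ne' (hpos i j).ne',
          Real.log_mul hφi.ne' hawD.ne',
          Real.log_div haw.ne' (hDpos i).ne',
          Real.log_mul (hapos i j).ne' (hwpos j).ne']
        have hla : Real.log (a i j) = Real.log (μ i j) - Real.log (m i) := by
          rw [hadef]
          show Real.log (μ i j / m i) = _
          exact Real.log_div (hpos i j).ne' (hm i).ne'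
        rw [hla, Real.log_div hφi.ne' (hm i).ne']
        ring
      · have hν : ν i j = 0 := by
          simp only [hνdef]
          rw [if_neg h]
        rw [hν, zero_mul, zero_mul]
    have hDKL2 : DKL2 ν μ = (∑ i, φ i * (Real.log (φ i / m i) - Real.log (D i)))
        + ∑ i, φ i * Real.log (w i) := by
      rw [DKL2]
      rw [Finset.sum_congr rfl fun i (_ : i ∈ univ) =>
        Finset.sum_congr rfl fun j (_ : j ∈ univ) => hkey i j]
      have e1 : ∀ i, ∑ j, ν i j * (Real.log (φ i / m i) + Real.log (w j) - Real.log (D i))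
          = φ i * (Real.log (φ i / m i) - Real.log (D i)) + ∑ j, ν i j * Real.log (w j) := by
        intro i
        have e : ∀ j, ν i j * (Real.log (φ i / m i) + Real.log (w j) - Real.log (D i))
            = ν i j * (Real.log (φ i / m i) - Real.log (D i)) + ν i j * Real.log (w j) :=
          fun j => by ring
        rw [Finset.sum_congr rfl fun j _ => e j, Finset.sum_add_distrib,
          ← Finset.sum_mul, hrow i]
      rw [Finset.sum_congr rfl fun i (_ : i ∈ univ) => e1 i, Finset.sum_add_distrib]
      congr 1
      rw [Finset.sum_comm]
      refine Finset.sum_congr rfl fun j _ => ?_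
      rw [← Finset.sum_mul, hcol j]
    have hDKL1 : DKL1 φ m = ∑ i, φ i * Real.log (φ i / m i) := rfl
    rw [Dc, hmarg, hDKL2, ← hmdef, hDKL1, hFwdef]
    have : ((∑ i, φ i * (Real.log (φ i / m i) - Real.log (D i)))
        + ∑ i, φ i * Real.log (w i)) - ∑ i, φ i * Real.log (φ i / m i)
        = ∑ i, φ i * (Real.log (w i) - Real.log (D i)) := by
      rw [← Finset.sum_add_distrib, ← Finset.sum_sub_distrib]
      exact Finset.sum_congr rfl fun i _ => by ring
    rw [this]
    rw [← Finset.sum_subset (Finset.subset_univ S)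
      (fun i _ hi => by rw [hφoff i hi, zero_mul])]
    refine Finset.sum_congr rfl fun i hi => ?_
    rw [Real.log_div (hwpos i).ne' (hDpos i).ne']
  refine ⟨ν, ⟨hMs2, hmarg⟩, ?_⟩
  rw [hDc]
  -- limit argument
  intro c hc
  set B : Fin n → ℝ := fun i => ∑ j ∈ Sᶜ, a i j with hBdef
  have hBnn : ∀ i, 0 ≤ B i := fun i => Finset.sum_nonneg fun j _ => (hapos i j).le
  set g : ℝ → ℝ := fun ε => ∑ i ∈ S, φ i * Real.log (w i / (D i + ε * B i)) with hgdef
  have hg0 : g 0 = Fw := by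
    rw [hgdef, hFwdef]
    simp only [zero_mul, add_zero]
  have hgc : Filter.Tendsto g (nhds 0) (nhds Fw) := by
    rw [← hg0]
    apply tendsto_finset_sum
    intro i _
    simp only [zero_mul, add_zero]
    apply Filter.Tendsto.const_mul
    have h1 : Filter.Tendsto (fun ε : ℝ => w i / (D i + ε * B i)) (nhds 0)
        (nhds (w i / (D i + 0 * B i))) := by
      apply Filter.Tendsto.div tendsto_const_nhds
      · exact (tendsto_const_nhds.add ((continuous_id.mul continuous_const).tendsto 0))
      · simp only [zero_mul, add_zero]
        exact (hDpos i).ne'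
    have h2 : (0:ℝ) * B i = 0 := zero_mul _
    rw [h2, add_zero] at h1
    exact h1.log (div_pos (hwpos i) (hDpos i)).ne'
  have hev : ∀ᶠ ε in nhdsWithin (0:ℝ) (Set.Ioi 0), c < g ε :=
    ((hgc.mono_left nhdsWithin_le_nhds).eventually (eventually_gt_nhds hc))
  obtain ⟨ε, hcε, hε⟩ := (hev.and (self_mem_nhdsWithin : Set.Ioi (0:ℝ) ∈ _)).exists
  refine ⟨fun i => if i ∈ S then w i else ε, ?_, ?_⟩
  · intro i
    show 0 < if i ∈ S then w i else ε
    split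
    · exact hwpos i
    · exact hε
  · have key : ∀ i, (∑ j, (μ i j / marg μ i) * (if j ∈ S then w j else ε)) = D i + ε * B i := by
      intro i
      rw [← Finset.sum_add_sum_compl S
        (fun j => (μ i j / marg μ i) * (if j ∈ S then w j else ε))]
      have h1 : (∑ j ∈ S, (μ i j / marg μ i) * (if j ∈ S then w j else ε)) = D i := by
        rw [hDdef]
        refine Finset.sum_congr rfl fun j hj => ?_
        rw [if_pos hj]
      have h2 : (∑ j ∈ Sᶜ, (μ i j / marg μ i) * (if j ∈ S then w j else ε)) = ε * B i := by
        rw [hBdef]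
        show _ = ε * ∑ j ∈ Sᶜ, a i j
        rw [Finset.mul_sum]
        refine Finset.sum_congr rfl fun j hj => ?_
        rw [if_neg (Finset.mem_compl.1 hj)]
        show μ i j / m i * ε = ε * a i j
        rw [hadef]
        ring
      rw [h1, h2]
    have hGg : (∑ i, φ i * Real.log ((if i ∈ S then w i else ε)
        / ∑ j, (μ i j / marg μ i) * (if j ∈ S then w j else ε))) = g ε := by
      rw [← Finset.sum_subset (Finset.subset_univ S)
        (fun i _ hi => by rw [hφoff i hi, zero_mul])]
      refine Finset.sum_congr rfl fun i hi => ?_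
      rw [if_pos hi, key i]
    show c < ∑ i, φ i * Real.log ((if i ∈ S then w i else ε)
        / ∑ j, (μ i j / marg μ i) * (if j ∈ S then w j else ε))
    rw [hGg]
    exact hcε

/-- Let `μ ∈ M_s(A²)` be strictly positive with associated
transition matrix `a_{ij} = μ_{ij}/μ̄_i`, and let `φ ∈ S_n`.  Then
`inf { D_c(ν‖μ) : ν ∈ M_s(A²), ν̄ = φ } = sup_{u>0} Σ_i φ_i log(u_i/(Au)_i)`, where
`(Au)_i = Σ_j a_{ij} u_j`. -/
theorem stmt18 {n : ℕ} (μ : Fin n → Fin n → ℝ)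
    (hμ : μ ∈ Ms2 n) (hpos : ∀ i j, 0 < μ i j)
    (φ : Fin n → ℝ) (hφ : φ ∈ simplex n) :
    (⨅ ν ∈ {ν : Fin n → Fin n → ℝ | ν ∈ Ms2 n ∧ marg ν = φ}, ((Dc ν μ : ℝ) : EReal))
      = ⨆ u ∈ {u : Fin n → ℝ | ∀ i, 0 < u i},
          (((∑ i, φ i * Real.log (u i / ∑ j, (μ i j / marg μ i) * u j)) : ℝ) : EReal) := by
  classical
  obtain ⟨hφ0, hφ1⟩ := hφ
  have hn : 0 < n := by
    rcases Nat.eq_zero_or_pos n with h | h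
    · subst h
      simp at hφ1
    · exact h
  obtain ⟨ν₀, ⟨hν₀M, hν₀m⟩, hν₀⟩ := exists_opt μ hpos φ hφ0 hφ1
  apply le_antisymm
  · refine le_trans (iInf₂_le ν₀ ⟨hν₀M, hν₀m⟩) ?_
    by_contra hlt
    push_neg at hlt
    obtain ⟨c, h1, h2⟩ := EReal.lt_iff_exists_real_btwn.1 hlt
    have h2' : c < Dc ν₀ μ := EReal.coe_lt_coe_iff.1 h2
    obtain ⟨u, hu, hcu⟩ := hν₀ c h2'
    have hle : (((∑ i, φ i * Real.log (u i / ∑ j, (μ i j / marg μ i) * u j)) : ℝ) : EReal)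
        ≤ ⨆ u ∈ {u : Fin n → ℝ | ∀ i, 0 < u i},
          (((∑ i, φ i * Real.log (u i / ∑ j, (μ i j / marg μ i) * u j)) : ℝ) : EReal) :=
      le_iSup₂ (f := fun (u : Fin n → ℝ) (_ : u ∈ {u : Fin n → ℝ | ∀ i, 0 < u i}) =>
        (((∑ i, φ i * Real.log (u i / ∑ j, (μ i j / marg μ i) * u j)) : ℝ) : EReal)) u hu
    have hc1 : (c : EReal)
        < (((∑ i, φ i * Real.log (u i / ∑ j, (μ i j / marg μ i) * u j)) : ℝ) : EReal) :=
      EReal.coe_lt_coe_iff.2 hcu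
    exact absurd (lt_of_lt_of_le hc1 hle) (not_lt.2 h1.le)
  · rw [le_iInf₂_iff]
    intro ν hν
    apply iSup₂_le
    intro u hu
    rw [EReal.coe_le_coe_iff, ← hν.2]
    exact weak_duality hn μ hpos ν hν.1 u hu
end

section
/- Let ν ∈ M_s(A²) be a stationary distribution on A² with marginal φ = ν̄, and let c₁,...,c_n be arbitrary real constants. Then Σ_{i∈A} Σ_{j∈A} ν_{ij} c_i = Σ_{i∈A} Σ_{j∈A} ν_{ij} c_j; moreover, if μ ∈ M_s(A²) has μ_{ij} > 0 for all i,j with transition matrix a_{ij} = μ_{ij}/μ̄_i, u* > 0 is a maximizer of g(u) = Σ_i φ_i log(u_i/(Au)_i), b_{ij} = a_{ij} u*_j / (Au*)_i, and ν*_{ij} = φ_i b_{ij}, then every ν ∈ M_s(A²) with ν̄ = φ satisfies D_c(ν‖μ) = D_c(ν‖ν*) + g(u*), and hence D_c(ν‖μ) ≥ g(u*). -/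
open Finset

/-- The transition matrix `a_{ij} = μ_{ij}/μ̄_i` associated with `μ`. -/
noncomputable def aMat {n : ℕ} (μ : Fin n → Fin n → ℝ) : Fin n → Fin n → ℝ :=
  fun i j => μ i j / marg μ i

/-- `g(u) = Σ_i φ_i log(u_i / (Au)_i)`. -/
noncomputable def gfun {n : ℕ} (μ : Fin n → Fin n → ℝ) (φ : Fin n → ℝ)
    (u : Fin n → ℝ) : ℝ :=
  ∑ i, φ i * Real.log (u i / ∑ j, aMat μ i j * u j)

/-- `b_{ij} = a_{ij} u*_j / (Au*)_i`. -/
noncomputable def bMat {n : ℕ} (μ : Fin n → Fin n → ℝ) (ustar : Fin n → ℝ) :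
    Fin n → Fin n → ℝ :=
  fun i j => aMat μ i j * ustar j / ∑ k, aMat μ i k * ustar k

lemma statSwap {n : ℕ} (ν : Fin n → Fin n → ℝ) (hν : IsStat2 ν) (c : Fin n → ℝ) :
    ∑ i, ∑ j, ν i j * c i = ∑ i, ∑ j, ν i j * c j := by
  calc ∑ i, ∑ j, ν i j * c i = ∑ i, (∑ j, ν i j) * c i := by
        simp [Finset.sum_mul]
    _ = ∑ i, (∑ j, ν j i) * c i := by
        exact Finset.sum_congr rfl fun i _ => by rw [hν i]
    _ = ∑ i, ∑ j, ν j i * c i := by simp [Finset.sum_mul]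
    _ = ∑ j, ∑ i, ν j i * c i := Finset.sum_comm

lemma klterm_ge {x y : ℝ} (hx : 0 ≤ x) (hy : 0 ≤ y) (h : x ≠ 0 → 0 < y) :
    x - y ≤ x * Real.log (x / y) := by
  rcases eq_or_lt_of_le hx with h0 | h0
  · simp [← h0]; linarith
  · have hy' := h h0.ne'
    have h1 := Real.log_le_sub_one_of_pos (show (0:ℝ) < y / x by positivity)
    have h2 : Real.log (x / y) = - Real.log (y / x) := by
      rw [← Real.log_inv]; congr 1; field_simp
    have h3 : x * (y / x - 1) = y - x := by field_simp
    nlinarith [mul_le_mul_of_nonneg_left h1 hx]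

/-- (i) For every stationary `ν` on `A²` and all constants
`c₁,...,c_n`, `Σ_{ij} ν_{ij} c_i = Σ_{ij} ν_{ij} c_j`.  (ii) If `μ ∈ M_s(A²)` is
strictly positive with transition matrix `a_{ij} = μ_{ij}/μ̄_i`, `u* > 0` maximizes
`g(u) = Σ_i φ_i log(u_i/(Au)_i)` over the positive orthant, `b_{ij} = a_{ij}u*_j/(Au*)_i`
and `ν*_{ij} = φ_i b_{ij}`, then every `ν ∈ M_s(A²)` with `ν̄ = φ` satisfies
`D_c(ν‖μ) = D_c(ν‖ν*) + g(u*)`, and hence `D_c(ν‖μ) ≥ g(u*)`. -/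
theorem stmt19 {n : ℕ} (μ : Fin n → Fin n → ℝ)
    (hμ : μ ∈ Ms2 n) (hpos : ∀ i j, 0 < μ i j)
    (φ : Fin n → ℝ) (hφ : (∀ i, 0 ≤ φ i) ∧ ∑ i, φ i = 1)
    (ustar : Fin n → ℝ) (hupos : ∀ i, 0 < ustar i)
    (hmax : ∀ u : Fin n → ℝ, (∀ i, 0 < u i) → gfun μ φ u ≤ gfun μ φ ustar) :
    (∀ ν : Fin n → Fin n → ℝ, IsStat2 ν → ∀ c : Fin n → ℝ,
      ∑ i, ∑ j, ν i j * c i = ∑ i, ∑ j, ν i j * c j) ∧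
    (∀ ν ∈ Ms2 n, marg ν = φ →
      Dc ν μ = Dc ν (fun i j => φ i * bMat μ ustar i j) + gfun μ φ ustar ∧
      gfun μ φ ustar ≤ Dc ν μ) := by
  have hne : Nonempty (Fin n) := by
    rcases n with _ | m
    · exfalso; simpa using hφ.2
    · exact ⟨0⟩
  have hmarg : ∀ i, 0 < marg μ i := fun i =>
    Finset.sum_pos (fun j _ => hpos i j) Finset.univ_nonempty
  have ha : ∀ i j, 0 < aMat μ i j := fun i j => div_pos (hpos i j) (hmarg i)
  have hA : ∀ i, 0 < ∑ k, aMat μ i k * ustar k := fun i =>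
    Finset.sum_pos (fun k _ => mul_pos (ha i k) (hupos k)) Finset.univ_nonempty
  have hb : ∀ i j, 0 < bMat μ ustar i j := fun i j =>
    div_pos (mul_pos (ha i j) (hupos j)) (hA i)
  -- row sums of b are 1
  have hbrow : ∀ i, ∑ j, bMat μ ustar i j = 1 := by
    intro i
    unfold bMat
    rw [← Finset.sum_div, div_self (hA i).ne']
  refine ⟨fun ν hν c => statSwap ν hν c, ?_⟩
  intro ν hν hm
  set νs : Fin n → Fin n → ℝ := fun i j => φ i * bMat μ ustar i j with hνs
  have hνnn : ∀ i j, 0 ≤ ν i j := hν.1.1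
  have hφν : ∀ i, ∑ j, ν i j = φ i := fun i => by rw [← hm]; rfl
  have hφnn := hφ.1
  have hposφ : ∀ i j, 0 < ν i j → 0 < φ i := fun i j h => by
    rw [← hφν i]
    exact Finset.sum_pos' (fun k _ => hνnn i k) ⟨j, Finset.mem_univ j, h⟩
  -- marginal of νs is φ
  have hmargνs : marg νs = φ := by
    funext i
    show ∑ j, φ i * bMat μ ustar i j = φ i
    rw [← Finset.mul_sum, hbrow i, mul_one]
  -- pointwise identity
  have point : ∀ i j, ν i j * Real.log (ν i j / μ i j)
      = ν i j * Real.log (ν i j / νs i j)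
        + ν i j * (((Real.log (φ i) - Real.log (marg μ i))
            - Real.log (∑ k, aMat μ i k * ustar k)) + Real.log (ustar j)) := by
    intro i j
    rcases (hνnn i j).eq_or_lt with h0 | h0
    · simp [← h0]
    · have hφp := hposφ i j h0
      have hbval : νs i j
          = φ i * ustar j * μ i j / (marg μ i * (∑ k, aMat μ i k * ustar k)) := by
        show φ i * bMat μ ustar i j = _
        unfold bMat aMat
        field_simp
      have h1 : (φ i * ustar j * μ i j : ℝ) ≠ 0 :=
        (mul_pos (mul_pos hφp (hupos j)) (hpos i j)).ne'
      have h2 : (marg μ i * ∑ k, aMat μ i k * ustar k : ℝ) ≠ 0 :=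
        (mul_pos (hmarg i) (hA i)).ne'
      rw [hbval, Real.log_div h0.ne' (hpos i j).ne', Real.log_div h0.ne' (div_ne_zero h1 h2),
          Real.log_div h1 h2,
          Real.log_mul (mul_pos hφp (hupos j)).ne' (hpos i j).ne',
          Real.log_mul hφp.ne' (hupos j).ne',
          Real.log_mul (hmarg i).ne' (hA i).ne']
      ring
  -- sum the identity
  have expand : DKL2 ν μ = DKL2 ν νs
      + ((∑ i, φ i * ((Real.log (φ i) - Real.log (marg μ i))
            - Real.log (∑ k, aMat μ i k * ustar k)))
        + ∑ i, φ i * Real.log (ustar i)) := by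
    have e1 : DKL2 ν μ = DKL2 ν νs
        + ∑ i, ∑ j, ν i j * (((Real.log (φ i) - Real.log (marg μ i))
            - Real.log (∑ k, aMat μ i k * ustar k)) + Real.log (ustar j)) := by
      unfold DKL2
      rw [← Finset.sum_add_distrib]
      refine Finset.sum_congr rfl fun i _ => ?_
      rw [← Finset.sum_add_distrib]
      exact Finset.sum_congr rfl fun j _ => point i j
    rw [e1]
    congr 1
    have e2 : ∀ i, ∑ j, ν i j * (((Real.log (φ i) - Real.log (marg μ i))
            - Real.log (∑ k, aMat μ i k * ustar k)) + Real.log (ustar j))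
        = φ i * ((Real.log (φ i) - Real.log (marg μ i))
            - Real.log (∑ k, aMat μ i k * ustar k))
          + ∑ j, ν i j * Real.log (ustar j) := by
      intro i
      rw [← hφν i, Finset.sum_mul, ← Finset.sum_add_distrib]
      exact Finset.sum_congr rfl fun j _ => by ring
    rw [Finset.sum_congr rfl fun i _ => e2 i, Finset.sum_add_distrib]
    congr 1
    rw [← statSwap ν hν.2 (fun i => Real.log (ustar i))]
    refine Finset.sum_congr rfl fun i _ => ?_
    rw [← Finset.sum_mul, hφν i]
  -- DKL1 pieces
  have hd1 : DKL1 (marg ν) (marg μ)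
      = ∑ i, φ i * (Real.log (φ i) - Real.log (marg μ i)) := by
    unfold DKL1
    rw [hm]
    refine Finset.sum_congr rfl fun i _ => ?_
    rcases (hφnn i).eq_or_lt with h0 | h0
    · simp [← h0]
    · rw [Real.log_div h0.ne' (hmarg i).ne']
  have hd2 : DKL1 (marg ν) (marg νs) = 0 := by
    unfold DKL1
    rw [hm, hmargνs]
    refine Finset.sum_eq_zero fun i _ => ?_
    rcases eq_or_ne (φ i) 0 with h0 | h0
    · simp [h0]
    · simp [div_self h0]
  have hg : gfun μ φ ustar = ∑ i, φ i * Real.log (ustar i)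
      - ∑ i, φ i * Real.log (∑ k, aMat μ i k * ustar k) := by
    unfold gfun
    rw [← Finset.sum_sub_distrib]
    refine Finset.sum_congr rfl fun i _ => ?_
    rw [Real.log_div (hupos i).ne' (hA i).ne']
    ring
  have key : Dc ν μ = Dc ν νs + gfun μ φ ustar := by
    unfold Dc
    rw [hd1, hd2, expand, hg]
    have : ∑ i, φ i * ((Real.log (φ i) - Real.log (marg μ i))
            - Real.log (∑ k, aMat μ i k * ustar k))
        = ∑ i, φ i * (Real.log (φ i) - Real.log (marg μ i))
          - ∑ i, φ i * Real.log (∑ k, aMat μ i k * ustar k) := by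
      rw [← Finset.sum_sub_distrib]
      exact Finset.sum_congr rfl fun i _ => by ring
    rw [this]
    ring
  refine ⟨key, ?_⟩
  -- nonnegativity of DKL2 ν νs
  have hnn : 0 ≤ DKL2 ν νs := by
    have hlow : ∀ i j, ν i j - νs i j ≤ ν i j * Real.log (ν i j / νs i j) := by
      intro i j
      refine klterm_ge (hνnn i j) (mul_nonneg (hφnn i) (hb i j).le) fun hx => ?_
      exact mul_pos (hposφ i j ((hνnn i j).lt_of_ne (Ne.symm hx))) (hb i j)
    have hsum : ∑ i, ∑ j, (ν i j - νs i j) ≤ DKL2 ν νs := by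
      refine Finset.sum_le_sum fun i _ => Finset.sum_le_sum fun j _ => hlow i j
    have htot : ∑ i, ∑ j, (ν i j - νs i j) = 0 := by
      have : ∀ i, ∑ j, (ν i j - νs i j) = 0 := by
        intro i
        rw [Finset.sum_sub_distrib, hφν i]
        have := congrFun hmargνs i
        simp only [marg] at this
        rw [this]
        ring
      simp [this]
    linarith
  have hdc : Dc ν νs = DKL2 ν νs := by
    unfold Dc
    rw [hd2]
    ring
  rw [key, hdc]
  linarith
end
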